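/- arXiv:1710.03847 — 3 statements merged into one kernel-verified Lean document; each statement's English description precedes it below -/
import Mathlib

section
/- Let n ≥ 3, let λ, k ≥ 1, and let r_1, …, r_k be positive integers such that 3 divides r_i·n for each i ∈ {1,…,k} and Σ_{i=1}^k r_i = λ·C(n−1, 2). Then λK_n^3 is (r_1,…,r_k)-factorizable: there exists a function c assigning to each pair (T, l), where T ⊆ Fin n with |T| = 3 and l ∈ Fin λ, a color c(T, l) ∈ {1,…,k}, such that for every vertex v ∈ Fin n and every color j, the number of pairs (T, l) with v ∈ T and c(T, l) = j equals r_j. -/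
open Finset

variable {α β : Type*} [Fintype α] [DecidableEq α] [Fintype β] [DecidableEq β]

lemma exists_circulation (S : Finset (α × β)) (hS : S.Nonempty)
    (hrow : ∀ a ∈ S.image Prod.fst, 2 ≤ (S.filter fun e => e.1 = a).card)
    (hcol : ∀ b ∈ S.image Prod.snd, 2 ≤ (S.filter fun e => e.2 = b).card) :
    ∃ z : α × β → ℚ, z ≠ 0 ∧ (∀ e, e ∉ S → z e = 0) ∧
      (∀ a, ∑ b, z (a, b) = 0) ∧ (∀ b, ∑ a, z (a, b) = 0) := by
  classical
  set A : Finset α := S.image Prod.fst with hA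
  set B : Finset β := S.image Prod.snd with hB
  let φ : (↥S → ℚ) →ₗ[ℚ] ((↥A → ℚ) × (↥B → ℚ)) :=
    { toFun := fun z => (fun a => ∑ e : ↥S, if (e : α × β).1 = (a : α) then z e else 0,
                         fun b => ∑ e : ↥S, if (e : α × β).2 = (b : β) then z e else 0),
      map_add' := by
        intro z1 z2
        ext x <;>
        · simp only [Prod.fst_add, Prod.snd_add, Pi.add_apply]
          rw [← Finset.sum_add_distrib]
          exact Finset.sum_congr rfl fun e _ => by split <;> simp
      map_smul' := by
        intro c z
        ext x <;>
        · simp only [Prod.smul_fst, Prod.smul_snd, Pi.smul_apply, RingHom.id_apply,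
            smul_eq_mul, Finset.mul_sum]
          exact Finset.sum_congr rfl fun e _ => by split <;> simp }
  let ℓ : ((↥A → ℚ) × (↥B → ℚ)) →ₗ[ℚ] ℚ :=
    { toFun := fun uv => (∑ a : ↥A, uv.1 a) - (∑ b : ↥B, uv.2 b),
      map_add' := by intro x y; simp [Finset.sum_add_distrib]; ring
      map_smul' := by intro c x; simp [Finset.mul_sum, mul_sub] }
  have hAne : A.Nonempty := hS.image _
  obtain ⟨a₀, ha₀⟩ := hAne
  have hℓsurj : LinearMap.range ℓ = ⊤ := by
    rw [LinearMap.range_eq_top]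
    intro q
    refine ⟨(fun a => if a = ⟨a₀, ha₀⟩ then q else 0, 0), ?_⟩
    simp [ℓ]
  have hrange : ∀ z, ℓ (φ z) = 0 := by
    intro z
    have h1 : ∑ a : ↥A, ∑ e : ↥S, (if (e : α × β).1 = (a : α) then z e else 0)
        = ∑ e : ↥S, z e := by
      rw [Finset.sum_comm]
      refine Finset.sum_congr rfl fun e _ => ?_
      have he : (e : α × β).1 ∈ A := Finset.mem_image_of_mem Prod.fst e.2
      rw [Finset.sum_eq_single (⟨(e : α × β).1, he⟩ : ↥A)]
      · simp
      · intro b _ hb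
        have : ¬((e : α × β).1 = (b : α)) := by
          intro h; apply hb; ext; simp [h]
        simp [this]
      · simp
    have h2 : ∑ b : ↥B, ∑ e : ↥S, (if (e : α × β).2 = (b : β) then z e else 0)
        = ∑ e : ↥S, z e := by
      rw [Finset.sum_comm]
      refine Finset.sum_congr rfl fun e _ => ?_
      have he : (e : α × β).2 ∈ B := Finset.mem_image_of_mem Prod.snd e.2
      rw [Finset.sum_eq_single (⟨(e : α × β).2, he⟩ : ↥B)]
      · simp
      · intro b _ hb
        have : ¬((e : α × β).2 = (b : β)) := by
          intro h; apply hb; ext; simp [h]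
        simp [this]
      · simp
    simp only [ℓ, φ, LinearMap.coe_mk, AddHom.coe_mk]
    show (∑ a : ↥A, ∑ e : ↥S, (if (e : α × β).1 = (a : α) then z e else 0)) -
      (∑ b : ↥B, ∑ e : ↥S, (if (e : α × β).2 = (b : β) then z e else 0)) = 0
    rw [h1, h2, sub_self]
  have hcardS : (A.card + B.card) ≤ S.card := by
    have h1 : S.card = ∑ a ∈ A, (S.filter fun e => e.1 = a).card := by
      apply Finset.card_eq_sum_card_fiberwise
      intro e he; exact Finset.mem_image_of_mem Prod.fst he
    have h2 : S.card = ∑ b ∈ B, (S.filter fun e => e.2 = b).card := by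
      apply Finset.card_eq_sum_card_fiberwise
      intro e he; exact Finset.mem_image_of_mem Prod.snd he
    have hA2 : 2 * A.card ≤ S.card := by
      rw [h1]; calc 2 * A.card = ∑ _a ∈ A, 2 := by simp [mul_comm]
        _ ≤ _ := Finset.sum_le_sum hrow
    have hB2 : 2 * B.card ≤ S.card := by
      rw [h2]; calc 2 * B.card = ∑ _b ∈ B, 2 := by simp [mul_comm]
        _ ≤ _ := Finset.sum_le_sum hcol
    omega
  have hker : ∃ z : ↥S → ℚ, z ≠ 0 ∧ φ z = 0 := by
    by_contra h
    push_neg at h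
    have hinj : Function.Injective φ := by
      rw [← LinearMap.ker_eq_bot, LinearMap.ker_eq_bot']
      intro z hz
      by_contra hz0
      exact (h z hz0) hz
    let φ' : (↥S → ℚ) →ₗ[ℚ] ↥(LinearMap.ker ℓ) :=
      LinearMap.codRestrict (LinearMap.ker ℓ) φ (fun z => hrange z)
    have hinj' : Function.Injective φ' := by
      intro x y hxy
      apply hinj
      exact congrArg Subtype.val hxy
    have hle := LinearMap.finrank_le_finrank_of_injective hinj'
    have hd1 : Module.finrank ℚ (↥S → ℚ) = S.card := by
      simp [Module.finrank_fintype_fun_eq_card]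
    have hd3 : Module.finrank ℚ ↥(LinearMap.ker ℓ) + 1 = A.card + B.card := by
      have h := LinearMap.finrank_range_add_finrank_ker ℓ
      rw [hℓsurj] at h
      have hd2 : Module.finrank ℚ ((↥A → ℚ) × (↥B → ℚ)) = A.card + B.card := by
        simp [Module.finrank_fintype_fun_eq_card]
      rw [finrank_top] at h
      rw [hd2] at h
      rw [Module.finrank_self] at h
      omega
    have hApos : 1 ≤ A.card := Finset.card_pos.mpr ⟨a₀, ha₀⟩
    rw [hd1] at hle
    omega
  obtain ⟨z, hz0, hzker⟩ := hker
  set z' : α × β → ℚ := fun e => if h : e ∈ S then z ⟨e, h⟩ else 0 with hz'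
  have h0 : ∀ e : ↥S, z e = z' (e : α × β) := fun e => by
    simp only [hz', dif_pos e.2, Subtype.coe_eta]
  refine ⟨z', ?_, ?_, ?_, ?_⟩
  · intro hcontra
    obtain ⟨e₀, he₀⟩ : ∃ e₀, z e₀ ≠ 0 := by
      by_contra hz
      push_neg at hz
      exact hz0 (funext hz)
    apply he₀
    rw [h0 e₀]
    rw [hcontra]
    rfl
  · intro e he; simp [hz', he]
  · intro a
    have h1 : ∑ e : ↥S, (if (e : α × β).1 = a then z e else 0)
        = ∑ e ∈ S, (if e.1 = a then z' e else 0) := by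
      rw [← Finset.sum_attach S (fun e => if e.1 = a then z' e else 0)]
      exact Finset.sum_congr rfl fun e _ => by rw [h0]
    have h2 : ∑ e ∈ S, (if e.1 = a then z' e else 0)
        = ∑ e : α × β, (if e.1 = a then z' e else 0) := by
      apply Finset.sum_subset (Finset.subset_univ S)
      intro e _ he
      have : z' e = 0 := by simp [hz', he]
      simp [this]
    have h3 : ∑ e : α × β, (if e.1 = a then z' e else 0) = ∑ b : β, z' (a, b) := by
      rw [Fintype.sum_prod_type, Finset.sum_comm]
      refine Finset.sum_congr rfl fun b _ => ?_
      rw [Finset.sum_ite_eq' Finset.univ a (fun a' => z' (a', b))]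
      simp
    rw [← h3, ← h2, ← h1]
    by_cases ha : a ∈ A
    · have := congrFun (congrArg Prod.fst hzker) ⟨a, ha⟩
      exact this
    · apply Finset.sum_eq_zero
      intro e _
      have : ¬((e : α × β).1 = a) := by
        intro h
        exact ha (h ▸ Finset.mem_image_of_mem Prod.fst e.2)
      simp [this]
  · intro b
    have h1 : ∑ e : ↥S, (if (e : α × β).2 = b then z e else 0)
        = ∑ e ∈ S, (if e.2 = b then z' e else 0) := by
      rw [← Finset.sum_attach S (fun e => if e.2 = b then z' e else 0)]
      exact Finset.sum_congr rfl fun e _ => by rw [h0]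
    have h2 : ∑ e ∈ S, (if e.2 = b then z' e else 0)
        = ∑ e : α × β, (if e.2 = b then z' e else 0) := by
      apply Finset.sum_subset (Finset.subset_univ S)
      intro e _ he
      have : z' e = 0 := by simp [hz', he]
      simp [this]
    have h3 : ∑ e : α × β, (if e.2 = b then z' e else 0) = ∑ a : α, z' (a, b) := by
      rw [Fintype.sum_prod_type]
      refine Finset.sum_congr rfl fun a _ => ?_
      rw [Finset.sum_ite_eq' Finset.univ b (fun b' => z' (a, b'))]
      simp
    rw [← h3, ← h2, ← h1]
    by_cases hb : b ∈ B
    · have := congrFun (congrArg Prod.snd hzker) ⟨b, hb⟩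
      exact this
    · apply Finset.sum_eq_zero
      intro e _
      have : ¬((e : α × β).2 = b) := by
        intro h
        exact hb (h ▸ Finset.mem_image_of_mem Prod.snd e.2)
      simp [this]

lemma row_two_frac {γ : Type*} [Fintype γ] [DecidableEq γ] (q : γ → ℚ)
    (h : ∃ m : ℤ, ∑ b, q b = (m : ℚ))
    [DecidablePred fun b => ¬ ∃ m : ℤ, q b = (m : ℚ)]
    (hne : (univ.filter fun b => ¬ ∃ m : ℤ, q b = (m : ℚ)).Nonempty) :
    2 ≤ (univ.filter fun b => ¬ ∃ m : ℤ, q b = (m : ℚ)).card := by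
  classical
  set T := univ.filter fun b => ¬ ∃ m : ℤ, q b = (m : ℚ) with hT
  by_contra hlt
  push_neg at hlt
  have hcard1 : T.card = 1 := by
    have := Finset.card_pos.mpr hne
    omega
  obtain ⟨b₀, hb₀⟩ := Finset.card_eq_one.mp hcard1
  have hb₀T : b₀ ∈ T := by rw [hb₀]; exact Finset.mem_singleton_self b₀
  have hb₀frac : ¬ ∃ m : ℤ, q b₀ = (m : ℚ) := (Finset.mem_filter.mp hb₀T).2
  apply hb₀frac
  -- all other entries are integral
  have hint : ∀ b ∈ univ.erase b₀, ∃ m : ℤ, q b = (m : ℚ) := by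
    intro b hb
    by_contra hbf
    have : b ∈ T := Finset.mem_filter.mpr ⟨Finset.mem_univ b, hbf⟩
    rw [hb₀] at this
    exact (Finset.mem_erase.mp hb).1 (Finset.mem_singleton.mp this)
  choose m hm using hint
  obtain ⟨M, hM⟩ := h
  refine ⟨M - ∑ b ∈ (univ.erase b₀).attach, m b.1 b.2, ?_⟩
  have hsplit : ∑ b, q b = q b₀ + ∑ b ∈ univ.erase b₀, q b := by
    rw [← Finset.add_sum_erase _ _ (Finset.mem_univ b₀)]
  have hrest : ∑ b ∈ univ.erase b₀, q b
      = ((∑ b ∈ (univ.erase b₀).attach, m b.1 b.2 : ℤ) : ℚ) := by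
    push_cast
    rw [← Finset.sum_attach (univ.erase b₀) q]
    exact Finset.sum_congr rfl fun b _ => hm b.1 b.2
  rw [hsplit, hrest] at hM
  push_cast at hM ⊢
  linarith

lemma matrix_rounding {α β : Type*} [Fintype α] [DecidableEq α] [Fintype β] [DecidableEq β]
    (x : α → β → ℚ)
    (hrow : ∀ a, ∃ m : ℤ, ∑ b, x a b = (m : ℚ))
    (hcol : ∀ b, ∃ m : ℤ, ∑ a, x a b = (m : ℚ)) :
    ∃ y : α → β → ℤ, (∀ a b, ⌊x a b⌋ ≤ y a b) ∧ (∀ a b, y a b ≤ ⌈x a b⌉) ∧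
      (∀ a, ((∑ b, y a b : ℤ) : ℚ) = ∑ b, x a b) ∧
      (∀ b, ((∑ a, y a b : ℤ) : ℚ) = ∑ a, x a b) := by
  classical
  suffices H : ∀ N (x : α → β → ℚ),
      (univ.filter fun e : α × β => ¬ ∃ m : ℤ, x e.1 e.2 = (m : ℚ)).card = N →
      (∀ a, ∃ m : ℤ, ∑ b, x a b = (m : ℚ)) →
      (∀ b, ∃ m : ℤ, ∑ a, x a b = (m : ℚ)) →
      ∃ y : α → β → ℤ, (∀ a b, ⌊x a b⌋ ≤ y a b) ∧ (∀ a b, y a b ≤ ⌈x a b⌉) ∧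
        (∀ a, ((∑ b, y a b : ℤ) : ℚ) = ∑ b, x a b) ∧
        (∀ b, ((∑ a, y a b : ℤ) : ℚ) = ∑ a, x a b) by
    exact H _ x rfl hrow hcol
  intro N
  induction N using Nat.strong_induction_on with
  | _ N IH =>
    intro x hN hrow hcol
    set F := univ.filter fun e : α × β => ¬ ∃ m : ℤ, x e.1 e.2 = (m : ℚ) with hF
    by_cases hFe : F.Nonempty
    · -- inductive step : find a circulation and push
      have hsupp : ∀ e : α × β, e ∉ F → ∃ m : ℤ, x e.1 e.2 = (m : ℚ) := by
        intro e he
        by_contra hc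
        exact he (Finset.mem_filter.mpr ⟨Finset.mem_univ e, hc⟩)
      -- each row/column meeting F meets it at least twice
      have hrow2 : ∀ a ∈ F.image Prod.fst, 2 ≤ (F.filter fun e => e.1 = a).card := by
        intro a ha
        obtain ⟨e, heF, hea⟩ := Finset.mem_image.mp ha
        have hbij : (F.filter fun e => e.1 = a).card
            = (univ.filter fun b => ¬ ∃ m : ℤ, x a b = (m : ℚ)).card := by
          refine Finset.card_bij' (fun e _ => e.2) (fun b _ => (a, b)) ?_ ?_ ?_ ?_
          · intro e he
            have h1 := Finset.mem_filter.mp he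
            have h2 := Finset.mem_filter.mp h1.1
            refine Finset.mem_filter.mpr ⟨Finset.mem_univ _, ?_⟩
            have h3 := h1.2
            show ¬∃ m : ℤ, x a e.2 = (m : ℚ)
            rw [← h3]; exact h2.2
          · intro b hb
            refine Finset.mem_filter.mpr ⟨?_, rfl⟩
            exact Finset.mem_filter.mpr ⟨Finset.mem_univ _, (Finset.mem_filter.mp hb).2⟩
          · intro e he
            have h1 := Finset.mem_filter.mp he
            have h3 := h1.2
            show (a, e.2) = e
            rw [← h3]
          · intro b _; rfl
        rw [hbij]
        apply row_two_frac _ (hrow a)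
        refine ⟨e.2, Finset.mem_filter.mpr ⟨Finset.mem_univ _, ?_⟩⟩
        have h2 := Finset.mem_filter.mp heF
        rw [← hea]; exact h2.2
      have hcol2 : ∀ b ∈ F.image Prod.snd, 2 ≤ (F.filter fun e => e.2 = b).card := by
        intro b hb
        obtain ⟨e, heF, heb⟩ := Finset.mem_image.mp hb
        have hbij : (F.filter fun e => e.2 = b).card
            = (univ.filter fun a => ¬ ∃ m : ℤ, x a b = (m : ℚ)).card := by
          refine Finset.card_bij' (fun e _ => e.1) (fun a _ => (a, b)) ?_ ?_ ?_ ?_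
          · intro e he
            have h1 := Finset.mem_filter.mp he
            have h2 := Finset.mem_filter.mp h1.1
            refine Finset.mem_filter.mpr ⟨Finset.mem_univ _, ?_⟩
            have h3 := h1.2
            show ¬∃ m : ℤ, x e.1 b = (m : ℚ)
            rw [← h3]; exact h2.2
          · intro a ha
            refine Finset.mem_filter.mpr ⟨?_, rfl⟩
            exact Finset.mem_filter.mpr ⟨Finset.mem_univ _, (Finset.mem_filter.mp ha).2⟩
          · intro e he
            have h1 := Finset.mem_filter.mp he
            have h3 := h1.2
            show (e.1, b) = e
            rw [← h3]
          · intro a _; rfl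
        rw [hbij]
        have hc : ∃ m : ℤ, ∑ a, x a b = (m : ℚ) := hcol b
        apply row_two_frac _ hc
        refine ⟨e.1, Finset.mem_filter.mpr ⟨Finset.mem_univ _, ?_⟩⟩
        have h2 := Finset.mem_filter.mp heF
        rw [← heb]; exact h2.2
      obtain ⟨z, hz0, hzsupp, hzrow, hzcol⟩ := exists_circulation F hFe hrow2 hcol2
      -- floor < x < ceil on F
      have hfrac : ∀ e ∈ F, ((⌊x e.1 e.2⌋ : ℚ) < x e.1 e.2 ∧ x e.1 e.2 < (⌈x e.1 e.2⌉ : ℚ)) := by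
        intro e he
        have hne : ¬ ∃ m : ℤ, x e.1 e.2 = (m : ℚ) := (Finset.mem_filter.mp he).2
        constructor
        · rcases lt_or_eq_of_le (Int.floor_le (x e.1 e.2)) with h | h
          · exact h
          · exact absurd ⟨⌊x e.1 e.2⌋, h.symm⟩ hne
        · rcases lt_or_eq_of_le (Int.le_ceil (x e.1 e.2)) with h | h
          · exact h
          · exact absurd ⟨⌈x e.1 e.2⌉, h⟩ hne
      -- the step size
      set td : α × β → ℚ := fun e =>
        if 0 < z e then ((⌈x e.1 e.2⌉ : ℚ) - x e.1 e.2) / z e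
        else (x e.1 e.2 - (⌊x e.1 e.2⌋ : ℚ)) / (- z e) with htd
      set F' : Finset (α × β) := univ.filter fun e => z e ≠ 0 with hF'
      have hF'ne : F'.Nonempty := by
        by_contra hc
        rw [Finset.not_nonempty_iff_eq_empty] at hc
        apply hz0
        funext e
        by_contra hze
        have : e ∈ F' := Finset.mem_filter.mpr ⟨Finset.mem_univ _, hze⟩
        rw [hc] at this
        exact absurd this (Finset.notMem_empty e)
      have hF'F : F' ⊆ F := by
        intro e he
        by_contra hc
        exact (Finset.mem_filter.mp he).2 (hzsupp e hc)
      have htdpos : ∀ e ∈ F', 0 < td e := by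
        intro e he
        have heF := hF'F he
        have hz := (Finset.mem_filter.mp he).2
        obtain ⟨hfl, hcl⟩ := hfrac e heF
        rw [htd]
        dsimp only
        split
        · apply div_pos (by linarith) (by assumption)
        · have hzneg : z e < 0 := by
            rcases lt_trichotomy (z e) 0 with h | h | h
            · exact h
            · exact absurd h hz
            · exact absurd h (by assumption)
          apply div_pos (by linarith) (by linarith)
      obtain ⟨e₀, he₀F', he₀min⟩ := Finset.exists_min_image F' td hF'ne
      set t := td e₀ with ht
      have htpos : 0 < t := htdpos e₀ he₀F'
      set x' : α → β → ℚ := fun a b => x a b + t * z (a, b) with hx'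
      -- bounds on x'
      have hbounds : ∀ a b, ((⌊x a b⌋ : ℚ) ≤ x' a b ∧ x' a b ≤ (⌈x a b⌉ : ℚ)) := by
        intro a b
        rcases lt_trichotomy (z (a, b)) 0 with hz | hz | hz
        · have hmem : (a, b) ∈ F' := Finset.mem_filter.mpr ⟨Finset.mem_univ _, ne_of_lt hz⟩
          obtain ⟨hfl, hcl⟩ := hfrac (a, b) (hF'F hmem)
          have hle := he₀min _ hmem
          have htd_eq : td (a, b) = (x a b - (⌊x a b⌋ : ℚ)) / (- z (a, b)) := by
            rw [htd]; dsimp only; rw [if_neg (by push_neg; linarith)]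
          constructor
          · -- x + t z ≥ floor since t ≤ (x - floor)/(-z)
            rw [hx']; dsimp only
            rw [htd_eq] at hle
            have h2 : t * (- z (a, b)) ≤ x a b - (⌊x a b⌋ : ℚ) := by
              rw [div_eq_mul_inv] at hle
              have hzpos : 0 < - z (a, b) := by linarith
              calc t * (- z (a,b)) ≤ ((x a b - (⌊x a b⌋:ℚ)) * (- z (a,b))⁻¹) * (- z (a,b)) := by
                    apply mul_le_mul_of_nonneg_right hle (le_of_lt hzpos)
                _ = x a b - (⌊x a b⌋ : ℚ) := inv_mul_cancel_right₀ (ne_of_gt hzpos) _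
            linarith
          · rw [hx']; dsimp only
            nlinarith
        · rw [hx']; dsimp only; rw [hz]
          simp
          exact ⟨Int.floor_le _, Int.le_ceil _⟩
        · have hmem : (a, b) ∈ F' := Finset.mem_filter.mpr ⟨Finset.mem_univ _, ne_of_gt hz⟩
          obtain ⟨hfl, hcl⟩ := hfrac (a, b) (hF'F hmem)
          have hle := he₀min _ hmem
          have htd_eq : td (a, b) = ((⌈x a b⌉ : ℚ) - x a b) / z (a, b) := by
            rw [htd]; dsimp only; rw [if_pos hz]
          constructor
          · rw [hx']; dsimp only
            nlinarith
          · rw [hx']; dsimp only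
            rw [htd_eq] at hle
            have h2 : t * z (a, b) ≤ (⌈x a b⌉ : ℚ) - x a b := by
              rw [div_eq_mul_inv] at hle
              calc t * z (a,b) ≤ (((⌈x a b⌉:ℚ) - x a b) * (z (a,b))⁻¹) * z (a,b) := by
                    apply mul_le_mul_of_nonneg_right hle (le_of_lt hz)
                _ = (⌈x a b⌉ : ℚ) - x a b := inv_mul_cancel_right₀ (ne_of_gt hz) _
            linarith
      -- e₀ becomes integral
      have he₀int : ∃ m : ℤ, x' e₀.1 e₀.2 = (m : ℚ) := by
        have hz := (Finset.mem_filter.mp he₀F').2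
        rw [hx']
        dsimp only
        rcases lt_or_gt_of_ne hz with hneg | hpos
        · refine ⟨⌊x e₀.1 e₀.2⌋, ?_⟩
          rw [ht, htd]
          dsimp only
          rw [if_neg (by push_neg; linarith), div_mul_eq_mul_div]
          rw [Prod.mk.eta]
          rw [div_neg, mul_div_assoc, div_self hz, mul_one]
          ring
        · refine ⟨⌈x e₀.1 e₀.2⌉, ?_⟩
          rw [ht, htd]
          dsimp only
          rw [if_pos hpos, div_mul_eq_mul_div]
          rw [Prod.mk.eta]
          rw [mul_div_assoc, div_self hz, mul_one]
          ring
      -- fractional set shrank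
      have hsub : (univ.filter fun e : α × β => ¬ ∃ m : ℤ, x' e.1 e.2 = (m : ℚ)) ⊆ F.erase e₀ := by
        intro e he
        have hef : ¬ ∃ m : ℤ, x' e.1 e.2 = (m : ℚ) := (Finset.mem_filter.mp he).2
        refine Finset.mem_erase.mpr ⟨?_, ?_⟩
        · intro hee
          rw [hee] at hef
          exact hef he₀int
        · by_contra hc
          apply hef
          have hz := hzsupp e hc
          rw [hx']
          dsimp only
          rw [Prod.mk.eta, hz, mul_zero, add_zero]
          exact hsupp e hc
      have hcard : (univ.filter fun e : α × β => ¬ ∃ m : ℤ, x' e.1 e.2 = (m : ℚ)).card < N := by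
        calc _ ≤ (F.erase e₀).card := Finset.card_le_card hsub
          _ < F.card := Finset.card_erase_lt_of_mem (hF'F he₀F')
          _ = N := hN
      -- sums preserved
      have hrowsum : ∀ a, ∑ b, x' a b = ∑ b, x a b := by
        intro a
        rw [hx']
        dsimp only
        rw [Finset.sum_add_distrib, ← Finset.mul_sum, hzrow a, mul_zero, add_zero]
      have hcolsum : ∀ b, ∑ a, x' a b = ∑ a, x a b := by
        intro b
        rw [hx']
        dsimp only
        rw [Finset.sum_add_distrib, ← Finset.mul_sum, hzcol b, mul_zero, add_zero]
      obtain ⟨y, hy1, hy2, hy3, hy4⟩ := IH _ hcard x' rfl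
        (fun a => by rw [hrowsum]; exact hrow a)
        (fun b => by rw [hcolsum]; exact hcol b)
      refine ⟨y, ?_, ?_, ?_, ?_⟩
      · intro a b
        have h1 := (hbounds a b).1
        have : ⌊x a b⌋ ≤ ⌊x' a b⌋ := Int.le_floor.mpr h1
        exact le_trans this (hy1 a b)
      · intro a b
        have h1 := (hbounds a b).2
        have : ⌈x' a b⌉ ≤ ⌈x a b⌉ := Int.ceil_le.mpr h1
        exact le_trans (hy2 a b) this
      · intro a; rw [hy3 a, hrowsum]
      · intro b; rw [hy4 b, hcolsum]
    · -- base case : all entries integral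
      rw [Finset.not_nonempty_iff_eq_empty] at hFe
      have hint : ∀ a b, ∃ m : ℤ, x a b = (m : ℚ) := by
        intro a b
        by_contra hc
        have : (a, b) ∈ F := Finset.mem_filter.mpr ⟨Finset.mem_univ _, hc⟩
        rw [hFe] at this
        exact absurd this (Finset.notMem_empty _)
      choose m hm using hint
      refine ⟨m, ?_, ?_, ?_, ?_⟩
      · intro a b; rw [hm a b]; simp
      · intro a b; rw [hm a b]; simp
      · intro a
        push_cast
        exact (Finset.sum_congr rfl fun b _ => (hm a b).symm)
      · intro b
        push_cast
        exact (Finset.sum_congr rfl fun a _ => (hm a b).symm)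

lemma exists_fiber_count {k m : ℕ} (w : Fin k → ℕ) (hw : ∑ j, w j = m) :
    ∃ f : Fin m → Fin k, ∀ j, (Finset.univ.filter fun l => f l = j).card = w j := by
  classical
  have hcard : Fintype.card (Σ j : Fin k, Fin (w j)) = m := by
    simp [hw]
  let e := Fintype.equivFinOfCardEq hcard
  refine ⟨fun l => (e.symm l).1, fun j => ?_⟩
  rw [← Fintype.card_subtype]
  have e3 : {s : (Σ j' : Fin k, Fin (w j')) // s.1 = j} ≃ Fin (w j) :=
    { toFun := fun s => Fin.cast (congrArg w s.2) s.1.2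
      invFun := fun t => ⟨⟨j, t⟩, rfl⟩
      left_inv := by rintro ⟨⟨j', t⟩, h⟩; subst h; rfl
      right_inv := fun t => rfl }
  rw [Fintype.card_congr ((e.symm.subtypeEquiv fun l => Iff.rfl).trans e3)]
  exact Fintype.card_fin _

lemma choose_mul_id (a b : ℕ) : (a + 1) * Nat.choose a b = Nat.choose (a + 1) (b + 1) * (b + 1) := by
  simpa [Nat.succ_eq_add_one] using Nat.add_one_mul_choose_eq a b

/-- **Sufficiency for `(r₁,…,r_k)`-factorization of `λK_n³`.**
If `n ≥ 3`, `3 ∣ rᵢ·n` for each `i`, and `∑ rᵢ = λ·C(n-1,2)`, then the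
complete 3-uniform multi-hypergraph `λK_n³` is `(r₁,…,r_k)`-factorizable:
there is a coloring `c` of its edges (pairs `(T, l)` with `T ⊆ Fin n`,
`|T| = 3`, `l ∈ Fin λ`) by colors in `Fin k` such that every vertex is
incident with exactly `r j` edges of each color `j`. -/
theorem lambdaKn3_factorizable (n lam k : ℕ) (hn : 3 ≤ n) (hlam : 1 ≤ lam)
    (hk : 1 ≤ k) (r : Fin k → ℕ) (hr : ∀ i, 0 < r i)
    (hdiv : ∀ i : Fin k, 3 ∣ r i * n)
    (hsum : ∑ i, r i = lam * Nat.choose (n - 1) 2) :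
    ∃ c : {T : Finset (Fin n) // T.card = 3} → Fin lam → Fin k,
      ∀ v : Fin n, ∀ j : Fin k,
        (Finset.univ.filter
          fun p : {T : Finset (Fin n) // T.card = 3} × Fin lam =>
            v ∈ p.1.val ∧ c p.1 p.2 = j).card = r j := by
  classical
  have hn1 : 1 ≤ n := le_trans (by norm_num) hn
  have hid : n * Nat.choose (n - 1) 2 = Nat.choose n 3 * 3 := by
    have h := Nat.add_one_mul_choose_eq (n - 1) 2
    rw [Nat.sub_add_cancel hn1] at h
    exact h
  have hinit : ∑ j, r j * n / 3 = lam * Nat.choose n 3 := by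
    have h3 : (∑ j, r j * n / 3) * 3 = lam * Nat.choose n 3 * 3 := by
      rw [Finset.sum_mul]
      have : ∀ j ∈ (univ : Finset (Fin k)), r j * n / 3 * 3 = r j * n := by
        intro j _
        exact Nat.div_mul_cancel (hdiv j)
      rw [Finset.sum_congr rfl this, ← Finset.sum_mul, hsum, mul_assoc,
        mul_comm (Nat.choose (n - 1) 2) n, hid, ← mul_assoc]
    omega
  -- main staged construction
  have main : ∀ m : ℕ, m ≤ n → ∃ g : Finset (Fin n) → Fin k → ℕ,
      (∀ S j, g S j ≠ 0 → S.card ≤ 3 ∧ ∀ v ∈ S, v.val < m) ∧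
      (∀ S : Finset (Fin n), S.card ≤ 3 → (∀ v ∈ S, v.val < m) →
        ∑ j, g S j = lam * Nat.choose (n - m) (3 - S.card)) ∧
      (∀ v : Fin n, v.val < m → ∀ j,
        ∑ S ∈ Finset.univ.filter (fun S => v ∈ S), g S j = r j) ∧
      (∀ j, ∑ S, g S j * (3 - S.card) = r j * (n - m)) := by
    intro m
    induction m with
    | zero =>
      intro _
      refine ⟨fun S j => if S = ∅ then r j * n / 3 else 0, ?_, ?_, ?_, ?_⟩
      · intro S j h
        by_cases hS : S = ∅
        · subst hS; simp
        · simp [hS] at h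
      · intro S hc hv
        have hS : S = ∅ := by
          rw [Finset.eq_empty_iff_forall_notMem]
          intro v hvS
          exact absurd (hv v hvS) (by omega)
        subst hS
        simpa using hinit
      · intro v hv; omega
      · intro j
        rw [Finset.sum_eq_single (∅ : Finset (Fin n))]
        · simpa using Nat.div_mul_cancel (hdiv j)
        · intro S _ hS; simp [hS]
        · intro h; exact absurd (Finset.mem_univ _) h
    | succ m IH =>
      intro hm1
      obtain ⟨g, hsupp, hA, hB, hD⟩ := IH (by omega)
      have hmn : m < n := by omega
      have hDpos : 0 < n - m := by omega
      have hDQ : ((n - m : ℕ) : ℚ) ≠ 0 := by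
        simp only [ne_eq, Nat.cast_eq_zero]; omega
      set vm : Fin n := ⟨m, hmn⟩ with hvm
      -- the fractional matrix
      set x : Finset (Fin n) → Fin k → ℚ :=
        fun S j => ((g S j * (3 - S.card) : ℕ) : ℚ) / ((n - m : ℕ) : ℚ) with hx
      -- target column sums
      set N : Finset (Fin n) → ℕ := fun S =>
        if S.card ≤ 2 ∧ ∀ v ∈ S, v.val < m then lam * Nat.choose (n - m - 1) (2 - S.card)
        else 0 with hN
      have hg_zero : ∀ S j, ¬(S.card ≤ 3 ∧ ∀ v ∈ S, v.val < m) → g S j = 0 := by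
        intro S j h
        by_contra hg
        exact h (hsupp S j hg)
      have hcolx : ∀ S, ∑ j, x S j = ((N S : ℕ) : ℚ) := by
        intro S
        rw [hx, hN]
        dsimp only
        rw [← Finset.sum_div]
        by_cases hcond : S.card ≤ 2 ∧ ∀ v ∈ S, v.val < m
        · rw [if_pos hcond]
          obtain ⟨hc2, hproc⟩ := hcond
          have hsumg : ∑ j, g S j = lam * Nat.choose (n - m) (3 - S.card) :=
            hA S (by omega) hproc
          have hnum : ∑ j, ((g S j * (3 - S.card) : ℕ) : ℚ)
              = ((lam * Nat.choose (n - m) (3 - S.card) * (3 - S.card) : ℕ) : ℚ) := by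
            push_cast
            rw [← Finset.sum_mul]
            congr 1
            exact_mod_cast congrArg (Nat.cast (R := ℚ)) hsumg
          rw [hnum]
          have hident : lam * Nat.choose (n - m) (3 - S.card) * (3 - S.card)
              = lam * Nat.choose (n - m - 1) (2 - S.card) * (n - m) := by
            have h32 : 3 - S.card = (2 - S.card) + 1 := by omega
            obtain ⟨D', hD'⟩ : ∃ D', n - m = D' + 1 := ⟨n - m - 1, by omega⟩
            have hD'' : n - m - 1 = D' := by omega
            rw [hD'', hD', h32, mul_assoc, ← choose_mul_id D' (2 - S.card)]
            ring
          rw [hident]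
          push_cast
          rw [mul_div_assoc, div_self hDQ, mul_one]
        · rw [if_neg hcond]
          have : ∀ j ∈ (univ : Finset (Fin k)), ((g S j * (3 - S.card) : ℕ) : ℚ) = 0 := by
            intro j _
            by_cases hg : g S j = 0
            · simp [hg]
            · obtain ⟨hc3, hproc⟩ := hsupp S j hg
              have hc : S.card = 3 := by
                by_contra h3
                exact hcond ⟨by omega, hproc⟩
              simp [hc]
          rw [Finset.sum_congr rfl this]
          simp
      have hrowx : ∀ j, ∑ S, x S j = ((r j : ℕ) : ℚ) := by
        intro j
        rw [hx]
        dsimp only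
        rw [← Finset.sum_div]
        have : ∑ S, ((g S j * (3 - S.card) : ℕ) : ℚ)
            = ((r j * (n - m) : ℕ) : ℚ) := by
          rw [← Nat.cast_sum]
          exact_mod_cast congrArg (Nat.cast (R := ℚ)) (hD j)
        rw [this]
        push_cast
        rw [mul_div_assoc, div_self hDQ, mul_one]
      obtain ⟨y, hy1, hy2, hy3, hy4⟩ := matrix_rounding x
        (fun S => ⟨N S, hcolx S⟩) (fun j => ⟨r j, hrowx j⟩)
      have hynn : ∀ S j, 0 ≤ y S j := by
        intro S j
        refine le_trans ?_ (hy1 S j)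
        apply Int.floor_nonneg.mpr
        rw [hx]
        positivity
      have hxg : ∀ S j, x S j ≤ ((g S j : ℕ) : ℚ) := by
        intro S j
        rw [hx]
        dsimp only
        by_cases hg : g S j = 0
        · simp [hg]
        · obtain ⟨hc3, hproc⟩ := hsupp S j hg
          by_cases hc : S.card = 3
          · simp [hc]
          · have hc2 : S.card ≤ 2 := by omega
            have hle : g S j ≤ lam * Nat.choose (n - m) (3 - S.card) := by
              rw [← hA S hc3 hproc]
              exact Finset.single_le_sum (fun j _ => Nat.zero_le _) (Finset.mem_univ j)
            have hch : Nat.choose (n - m) (3 - S.card) ≠ 0 := by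
              intro h0
              rw [h0, mul_zero] at hle
              omega
            have h3D : 3 - S.card ≤ n - m := by
              by_contra hlt
              exact hch (Nat.choose_eq_zero_of_lt (by omega))
            rw [div_le_iff₀ (by exact_mod_cast hDpos)]
            push_cast
            have := Nat.mul_le_mul_left (g S j) h3D
            exact_mod_cast this
      have hyg : ∀ S j, y S j ≤ (g S j : ℤ) := by
        intro S j
        refine le_trans (hy2 S j) ?_
        apply Int.ceil_le.mpr
        exact_mod_cast hxg S j
      set yn : Finset (Fin n) → Fin k → ℕ := fun S j => (y S j).toNat with hyn
      have hyncast : ∀ S j, ((yn S j : ℕ) : ℤ) = y S j := by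
        intro S j; exact Int.toNat_of_nonneg (hynn S j)
      have hyng : ∀ S j, yn S j ≤ g S j := by
        intro S j
        have := hyg S j
        rw [← hyncast S j] at this
        exact_mod_cast this
      have hyncol : ∀ S, ∑ j, yn S j = N S := by
        intro S
        have h := hy3 S
        rw [hcolx S] at h
        have hz : (∑ j, y S j) = (N S : ℤ) := by exact_mod_cast h
        have : ((∑ j, yn S j : ℕ) : ℤ) = ((N S : ℕ) : ℤ) := by
          rw [← hz]
          push_cast
          exact Finset.sum_congr rfl fun j _ => hyncast S j
        exact_mod_cast this
      have hynrow : ∀ j, ∑ S, yn S j = r j := by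
        intro j
        have h := hy4 j
        rw [hrowx j] at h
        have hz : (∑ S, y S j) = (r j : ℤ) := by exact_mod_cast h
        have : ((∑ S, yn S j : ℕ) : ℤ) = ((r j : ℕ) : ℤ) := by
          rw [← hz]
          push_cast
          exact Finset.sum_congr rfl fun S _ => hyncast S j
        exact_mod_cast this
      have hynsupp : ∀ S j, yn S j ≠ 0 → (S.card ≤ 2 ∧ ∀ v ∈ S, v.val < m) := by
        intro S j h
        have h1 : yn S j ≤ N S := by
          rw [← hyncol S]
          exact Finset.single_le_sum (fun j _ => Nat.zero_le _) (Finset.mem_univ j)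
        simp only [hN] at h1
        by_contra hc
        rw [if_neg hc] at h1
        omega
      -- the new state
      set g' : Finset (Fin n) → Fin k → ℕ := fun S j =>
        if vm ∈ S then yn (S.erase vm) j else g S j - yn S j with hg'
      have hval_lt : ∀ v : Fin n, v.val < m + 1 → v ≠ vm → v.val < m := by
        intro v hv hne
        have : (v : ℕ) ≠ m := by
          intro h
          exact hne (Fin.ext h)
        omega
      -- yn vanishes on sets containing vm
      have hynvm : ∀ S j, vm ∈ S → yn S j = 0 := by
        intro S j hvS
        by_contra h
        have := (hynsupp S j h).2 vm hvS
        simp [hvm] at this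
      -- g vanishes on sets containing vm
      have hgvm : ∀ S j, vm ∈ S → g S j = 0 := by
        intro S j hvS
        by_contra h
        have := (hsupp S j h).2 vm hvS
        simp [hvm] at this
      refine ⟨g', ?_, ?_, ?_, ?_⟩
      · -- support
        intro S j h
        rw [hg'] at h
        dsimp only at h
        by_cases hvS : vm ∈ S
        · rw [if_pos hvS] at h
          obtain ⟨hc2, hproc⟩ := hynsupp _ _ h
          constructor
          · have := Finset.card_erase_of_mem hvS
            omega
          · intro v hvS'
            by_cases hveq : v = vm
            · subst hveq; simp [hvm]
            · have : v ∈ S.erase vm := Finset.mem_erase.mpr ⟨hveq, hvS'⟩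
              have := hproc v this
              omega
        · rw [if_neg hvS] at h
          have hg : g S j ≠ 0 := by omega
          obtain ⟨hc3, hproc⟩ := hsupp S j hg
          exact ⟨hc3, fun v hv => by have := hproc v hv; omega⟩
      · -- column sums (A)
        intro S hc3 hproc
        rw [hg']
        dsimp only
        by_cases hvS : vm ∈ S
        · rw [Finset.sum_congr rfl (fun j _ => if_pos hvS)]
          rw [hyncol]
          simp only [hN]
          beta_reduce
          have hc1 : 1 ≤ S.card := Finset.card_pos.mpr ⟨vm, hvS⟩
          have hce : (S.erase vm).card = S.card - 1 := Finset.card_erase_of_mem hvS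
          have hproc' : ∀ v ∈ S.erase vm, v.val < m := by
            intro v hv
            obtain ⟨hne, hvS'⟩ := Finset.mem_erase.mp hv
            exact hval_lt v (hproc v hvS') hne
          rw [if_pos ⟨by omega, hproc'⟩]
          congr 1
          rw [hce]
          congr 1 <;> omega
        · rw [Finset.sum_congr rfl (fun j _ => if_neg hvS)]
          have hproc' : ∀ v ∈ S, v.val < m := by
            intro v hv
            refine hval_lt v (hproc v hv) ?_
            intro hveq
            exact hvS (hveq ▸ hv)
          rw [Finset.sum_tsub_distrib _ (fun j _ => hyng S j)]
          rw [hA S hc3 hproc', hyncol]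
          simp only [hN]
          beta_reduce
          by_cases hc2 : S.card ≤ 2
          · rw [if_pos ⟨hc2, hproc'⟩]
            have hpascal : Nat.choose (n - m) (3 - S.card)
                = Nat.choose (n - m - 1) (2 - S.card) + Nat.choose (n - m - 1) (3 - S.card) := by
              have h32 : 3 - S.card = (2 - S.card) + 1 := by omega
              obtain ⟨D', hD'⟩ : ∃ D', n - m = D' + 1 := ⟨n - m - 1, by omega⟩
              have hD'' : n - m - 1 = D' := by omega
              rw [hD'', hD', h32, Nat.choose_succ_succ]
            have hnm1 : n - (m + 1) = n - m - 1 := by omega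
            rw [hnm1, hpascal]
            rw [Nat.mul_add]
            omega
          · have hc33 : S.card = 3 := by omega
            rw [if_neg (by omega)]
            rw [hc33]
            have hnm1 : n - (m + 1) = n - m - 1 := by omega
            simp [hnm1]
      · -- degrees (B)
        intro v hv j
        by_cases hveq : v = vm
        · subst hveq
          rw [hg']
          dsimp only
          have hfilter : ∀ S ∈ univ.filter (fun S => vm ∈ S),
              (if vm ∈ S then yn (S.erase vm) j else g S j - yn S j) = yn (S.erase vm) j := by
            intro S hS
            rw [if_pos (Finset.mem_filter.mp hS).2]
          rw [Finset.sum_congr rfl hfilter]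
          -- bijection with sets not containing vm
          rw [Finset.sum_nbij' (i := fun S => S.erase vm) (j := fun S => insert vm S)
            (t := univ.filter (fun S => vm ∉ S)) (g := fun S => yn S j)]
          · -- now sum over sets not containing vm equals sum over all sets
            rw [Finset.sum_filter]
            rw [← Finset.sum_congr rfl (fun S _ => ?_), hynrow j]
            by_cases hvS : vm ∈ S
            · rw [if_neg (by simpa using hvS), hynvm S j hvS]
            · rw [if_pos hvS]
          · intro S hS
            simp only [Finset.mem_filter, Finset.mem_univ, true_and] at hS ⊢
            exact Finset.notMem_erase vm S
          · intro S hS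
            simp only [Finset.mem_filter, Finset.mem_univ, true_and]
            exact Finset.mem_insert_self vm S
          · intro S hS
            simp only [Finset.mem_filter, Finset.mem_univ, true_and] at hS
            exact Finset.insert_erase hS
          · intro S hS
            simp only [Finset.mem_filter, Finset.mem_univ, true_and] at hS
            exact Finset.erase_insert hS
          · intro S hS; rfl
        · have hvm2 : v.val < m := hval_lt v hv hveq
          rw [hg']
          dsimp only
          rw [← Finset.sum_filter_add_sum_filter_not (univ.filter (fun S => v ∈ S))
            (fun S => vm ∈ S)]
          have heq1 : ∑ S ∈ (univ.filter (fun S => v ∈ S)).filter (fun S => vm ∈ S),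
              (if vm ∈ S then yn (S.erase vm) j else g S j - yn S j)
              = ∑ S ∈ (univ.filter (fun S => v ∈ S)).filter (fun S => vm ∉ S), yn S j := by
            rw [Finset.sum_congr rfl (fun S hS => if_pos (Finset.mem_filter.mp hS).2)]
            rw [Finset.sum_nbij' (i := fun S => S.erase vm) (j := fun S => insert vm S)
              (g := fun S => yn S j)]
            · intro S hS
              simp only [Finset.mem_filter, Finset.mem_univ, true_and] at hS ⊢
              exact ⟨Finset.mem_erase.mpr ⟨hveq, hS.1⟩, Finset.notMem_erase vm S⟩
            · intro S hS
              simp only [Finset.mem_filter, Finset.mem_univ, true_and] at hS ⊢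
              exact ⟨Finset.mem_insert_of_mem hS.1, Finset.mem_insert_self vm S⟩
            · intro S hS
              simp only [Finset.mem_filter, Finset.mem_univ, true_and] at hS
              exact Finset.insert_erase hS.2
            · intro S hS
              simp only [Finset.mem_filter, Finset.mem_univ, true_and] at hS
              exact Finset.erase_insert hS.2
            · intro S hS; rfl
          have heq2 : ∑ S ∈ (univ.filter (fun S => v ∈ S)).filter (fun S => ¬ vm ∈ S),
              (if vm ∈ S then yn (S.erase vm) j else g S j - yn S j)
              = (∑ S ∈ (univ.filter (fun S => v ∈ S)).filter (fun S => ¬ vm ∈ S), g S j)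
                - ∑ S ∈ (univ.filter (fun S => v ∈ S)).filter (fun S => ¬ vm ∈ S), yn S j := by
            rw [Finset.sum_congr rfl (fun S hS => if_neg (Finset.mem_filter.mp hS).2)]
            exact Finset.sum_tsub_distrib _ (fun S _ => hyng S j)
          rw [heq1, heq2]
          have hle : ∑ S ∈ (univ.filter (fun S => v ∈ S)).filter (fun S => ¬ vm ∈ S), yn S j
              ≤ ∑ S ∈ (univ.filter (fun S => v ∈ S)).filter (fun S => ¬ vm ∈ S), g S j :=
            Finset.sum_le_sum (fun S _ => hyng S j)
          have hgeq : ∑ S ∈ (univ.filter (fun S => v ∈ S)).filter (fun S => ¬ vm ∈ S), g S j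
              = r j := by
            rw [← hB v hvm2 j]
            symm
            rw [← Finset.sum_filter_add_sum_filter_not (univ.filter (fun S => v ∈ S))
              (fun S => vm ∈ S) (fun S => g S j)]
            have : ∑ S ∈ (univ.filter (fun S => v ∈ S)).filter (fun S => vm ∈ S), g S j = 0 := by
              apply Finset.sum_eq_zero
              intro S hS
              exact hgvm S j (Finset.mem_filter.mp hS).2
            rw [this, zero_add]
          omega
      · -- budget (D)
        intro j
        rw [hg']
        dsimp only
        rw [← Finset.sum_filter_add_sum_filter_not (univ : Finset (Finset (Fin n)))
          (fun S => vm ∈ S)]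
        have hT1 : ∑ S ∈ univ.filter (fun S => vm ∈ S),
            (if vm ∈ S then yn (S.erase vm) j else g S j - yn S j) * (3 - S.card)
            = ∑ S, yn S j * (2 - S.card) := by
          rw [Finset.sum_congr rfl (fun S hS => by
            rw [if_pos (Finset.mem_filter.mp hS).2])]
          rw [Finset.sum_nbij' (i := fun S => S.erase vm) (j := fun S => insert vm S)
            (t := univ.filter (fun S => vm ∉ S))
            (g := fun S => yn S j * (2 - S.card))]
          · rw [Finset.sum_filter]
            rw [← Finset.sum_congr rfl (fun S _ => ?_)]
            by_cases hvS : vm ∈ S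
            · rw [if_neg (by simpa using hvS), hynvm S j hvS, zero_mul]
            · rw [if_pos hvS]
          · intro S hS
            simp only [Finset.mem_filter, Finset.mem_univ, true_and] at hS ⊢
            exact Finset.notMem_erase vm S
          · intro S hS
            simp only [Finset.mem_filter, Finset.mem_univ, true_and]
            exact Finset.mem_insert_self vm S
          · intro S hS
            simp only [Finset.mem_filter, Finset.mem_univ, true_and] at hS
            exact Finset.insert_erase hS
          · intro S hS
            simp only [Finset.mem_filter, Finset.mem_univ, true_and] at hS
            exact Finset.erase_insert hS
          · intro S hS
            simp only [Finset.mem_filter, Finset.mem_univ, true_and] at hS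
            have hcard : S.card = (S.erase vm).card + 1 := by
              rw [Finset.card_erase_of_mem hS]
              have : 1 ≤ S.card := Finset.card_pos.mpr ⟨vm, hS⟩
              omega
            rw [hcard]
            congr 1
            omega
        have hT2 : ∑ S ∈ univ.filter (fun S => ¬ vm ∈ S),
            (if vm ∈ S then yn (S.erase vm) j else g S j - yn S j) * (3 - S.card)
            = (∑ S, g S j * (3 - S.card)) - ∑ S, yn S j * (3 - S.card) := by
          rw [Finset.sum_congr rfl (fun S hS => by
            rw [if_neg (Finset.mem_filter.mp hS).2, Nat.sub_mul])]
          rw [Finset.sum_tsub_distrib _ (fun S _ => Nat.mul_le_mul_right _ (hyng S j))]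
          congr 1
          · rw [Finset.sum_filter]
            refine Finset.sum_congr rfl fun S _ => ?_
            by_cases hvS : vm ∈ S
            · rw [if_neg (by simpa using hvS), hgvm S j hvS, zero_mul]
            · rw [if_pos hvS]
          · rw [Finset.sum_filter]
            refine Finset.sum_congr rfl fun S _ => ?_
            by_cases hvS : vm ∈ S
            · rw [if_neg (by simpa using hvS), hynvm S j hvS, zero_mul]
            · rw [if_pos hvS]
        rw [hT1, hT2, hD j]
        have hsplit : ∑ S, yn S j * (3 - S.card)
            = (∑ S, yn S j * (2 - S.card)) + r j := by
          rw [← hynrow j, ← Finset.sum_add_distrib]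
          refine Finset.sum_congr rfl fun S _ => ?_
          by_cases hy0 : yn S j = 0
          · simp [hy0]
          · have hc2 := (hynsupp S j hy0).1
            have : 3 - S.card = (2 - S.card) + 1 := by omega
            rw [this, Nat.mul_add, mul_one]
        rw [hsplit]
        have hle2 : (∑ S, yn S j * (2 - S.card)) + r j ≤ r j * (n - m) := by
          rw [← hsplit, ← hD j]
          exact Finset.sum_le_sum (fun S _ => Nat.mul_le_mul_right _ (hyng S j))
        have hrrw : r j * (n - (m + 1)) = r j * (n - m) - r j := by
          have : n - (m + 1) = (n - m) - 1 := by omega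
          rw [this, Nat.mul_sub, mul_one]
        omega
  -- final assembly
  obtain ⟨g, hsupp, hA, hB, _⟩ := main n le_rfl
  have htriple : ∀ T : Finset (Fin n), T.card = 3 → ∑ j, g T j = lam := by
    intro T hT
    have := hA T (by omega) (fun v _ => v.isLt)
    rw [hT] at this
    simpa using this
  have hoff : ∀ S : Finset (Fin n), S.card ≠ 3 → ∀ j, g S j = 0 := by
    intro S hS j
    by_contra hg
    obtain ⟨hc3, _⟩ := hsupp S j hg
    have hc2 : S.card ≤ 2 := by omega
    have := hA S hc3 (fun v _ => v.isLt)
    have hch : Nat.choose (n - n) (3 - S.card) = 0 := by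
      rw [Nat.sub_self]
      have : 3 - S.card = (2 - S.card) + 1 := by omega
      rw [this]
      exact Nat.choose_zero_succ _
    rw [hch, mul_zero] at this
    have : g S j ≤ 0 := by
      rw [← this]
      exact Finset.single_le_sum (fun j _ => Nat.zero_le _) (Finset.mem_univ j)
    omega
  -- build the coloring
  have hc : ∀ T : {T : Finset (Fin n) // T.card = 3},
      ∃ f : Fin lam → Fin k, ∀ j, (univ.filter fun l => f l = j).card = g T.val j := by
    intro T
    exact exists_fiber_count (fun j => g T.val j) (htriple T.val T.prop)
  choose c hcc using hc
  refine ⟨c, ?_⟩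
  intro v j
  rw [Finset.card_eq_sum_card_fiberwise (f := fun p => p.1)
    (t := (univ : Finset {T : Finset (Fin n) // T.card = 3})) (fun p _ => Finset.mem_univ _)]
  have hfib : ∀ T : {T : Finset (Fin n) // T.card = 3},
      ((univ.filter fun p : {T : Finset (Fin n) // T.card = 3} × Fin lam =>
        v ∈ p.1.val ∧ c p.1 p.2 = j).filter fun p => p.1 = T).card
      = if v ∈ T.val then g T.val j else 0 := by
    intro T
    by_cases hvT : v ∈ T.val
    · rw [if_pos hvT]
      rw [← hcc T j]
      apply Finset.card_nbij' (i := fun p => p.2) (j := fun l => (T, l))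
      · intro p hp
        simp only [Finset.mem_coe, Finset.mem_filter, Finset.mem_univ, true_and] at hp ⊢
        obtain ⟨⟨_, hcj⟩, hpT⟩ := hp
        rw [← hpT]
        exact hcj
      · intro l hl
        simp only [Finset.mem_coe, Finset.mem_filter, Finset.mem_univ, true_and] at hl ⊢
        exact ⟨⟨hvT, hl⟩, trivial⟩
      · intro p hp
        simp only [Finset.mem_coe, Finset.mem_filter, Finset.mem_univ, true_and] at hp
        rw [← hp.2]
      · intro l _; rfl
    · rw [if_neg hvT]
      rw [Finset.card_eq_zero]
      rw [Finset.filter_eq_empty_iff]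
      intro p hp
      simp only [Finset.mem_filter, Finset.mem_univ, true_and] at hp
      intro hpT
      exact hvT (hpT ▸ hp.1)
  rw [Finset.sum_congr rfl (fun T _ => hfib T)]
  -- now relate to the degree invariant
  have hfin : ∑ T : {T : Finset (Fin n) // T.card = 3},
      (if v ∈ T.val then g T.val j else 0) = r j := by
    rw [← Finset.sum_subtype (univ.filter fun S : Finset (Fin n) => S.card = 3)
      (fun S => by simp) (fun S => if v ∈ S then g S j else 0)]
    rw [← hB v v.isLt j]
    rw [Finset.sum_filter]
    rw [Finset.sum_filter]
    refine Finset.sum_congr rfl fun S _ => ?_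
    by_cases hS3 : S.card = 3
    · rw [if_pos hS3]
    · rw [if_neg hS3]
      by_cases hvS : v ∈ S
      · rw [if_pos hvS, hoff S hS3 j]
      · rw [if_neg hvS]
  exact hfin
end

section
/- Let n ≥ 3, let λ, k ≥ 1, let m_1, …, m_n be positive integers, and let r_1, …, r_k be positive integers. If λK_{m_1,…,m_n}^3 is (r_1,…,r_k)-factorizable — i.e., on the vertex set consisting of n disjoint parts V_1, …, V_n with |V_i| = m_i there exists a function c assigning to each pair (T, l), where T is a 3-element set of vertices lying in three distinct parts and l ∈ Fin λ, a color in {1,…,k}, such that for every vertex v and every color j the number of pairs (T, l) with v ∈ T and c(T, l) = j equals r_j — then: (i) m_1 = m_2 = … = m_n =: m; (ii) 3 divides r_i·m·n for each i ∈ {1,…,k}; and (iii) Σ_{i=1}^k r_i = λ·C(n−1, 2)·m². -/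
open Finset

private lemma card_fiber {n : ℕ} {m : Fin n → ℕ} (p : Fin n) :
    (univ.filter fun w : (i : Fin n) × Fin (m i) => w.1 = p).card = m p := by
  have h : (univ.filter fun w : (i : Fin n) × Fin (m i) => w.1 = p)
      = univ.image (Sigma.mk p) := by
    ext ⟨a, b⟩
    simp only [mem_filter, mem_univ, true_and, mem_image]
    constructor
    · rintro rfl; exact ⟨b, rfl⟩
    · rintro ⟨x, h⟩; cases h; rfl
  rw [h, Finset.card_image_of_injective _ sigma_mk_injective, card_univ,
    Fintype.card_fin]

private lemma pairs_count {n : ℕ} {m : Fin n → ℕ} (i : Fin n) :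
    (univ.filter fun q : ((i : Fin n) × Fin (m i)) × ((i : Fin n) × Fin (m i)) =>
        q.1.1 ≠ q.2.1 ∧ q.1.1 ≠ i ∧ q.2.1 ≠ i).card
      + ∑ p ∈ univ.erase i, m p * m p
      = (∑ p ∈ univ.erase i, m p) * (∑ p ∈ univ.erase i, m p) := by
  set A := univ.filter fun u : (i : Fin n) × Fin (m i) => u.1 ≠ i with hAdef
  have hA : A.card = ∑ p ∈ univ.erase i, m p := by
    rw [Finset.card_eq_sum_card_fiberwise (f := Sigma.fst) (t := univ.erase i)
      (fun x hx => by simp only [hAdef, Finset.mem_coe, mem_filter] at hx; simp [hx.2])]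
    refine Finset.sum_congr rfl fun p hp => ?_
    have hpi : p ≠ i := (mem_erase.mp hp).1
    rw [Finset.filter_filter]
    have heq : (univ.filter fun u : (i : Fin n) × Fin (m i) => u.1 ≠ i ∧ u.1 = p)
        = univ.filter fun u => u.1 = p := by
      apply Finset.filter_congr
      intro u _
      constructor
      · exact fun h => h.2
      · exact fun h => ⟨h ▸ hpi, h⟩
    rw [heq]
    exact card_fiber p
  have hS : (univ.filter fun q : ((i : Fin n) × Fin (m i)) × ((i : Fin n) × Fin (m i)) =>
        q.1.1 ≠ q.2.1 ∧ q.1.1 ≠ i ∧ q.2.1 ≠ i)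
      = (A ×ˢ A).filter fun q => q.1.1 ≠ q.2.1 := by
    ext q
    simp only [mem_filter, mem_univ, true_and, mem_product, hAdef]
    tauto
  have hD : ((A ×ˢ A).filter fun q => ¬ q.1.1 ≠ q.2.1).card
      = ∑ p ∈ univ.erase i, m p * m p := by
    rw [Finset.card_eq_sum_card_fiberwise (f := fun q => q.1.1) (t := univ.erase i)
      (fun x hx => by
        simp only [Finset.mem_coe, mem_filter, mem_product, hAdef, mem_univ, true_and] at hx
        simp [hx.1.1])]
    refine Finset.sum_congr rfl fun p hp => ?_
    have hpi : p ≠ i := (mem_erase.mp hp).1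
    have heq : ((A ×ˢ A).filter fun q => ¬ q.1.1 ≠ q.2.1).filter (fun q => q.1.1 = p)
        = (univ.filter fun w : (i : Fin n) × Fin (m i) => w.1 = p) ×ˢ
          (univ.filter fun w : (i : Fin n) × Fin (m i) => w.1 = p) := by
      ext q
      simp only [mem_filter, mem_product, hAdef, mem_univ, true_and, not_not]
      constructor
      · rintro ⟨⟨⟨h1, h2⟩, h3⟩, h4⟩; exact ⟨h4, h3 ▸ h4⟩
      · rintro ⟨h1, h2⟩
        exact ⟨⟨⟨h1 ▸ hpi, h2 ▸ hpi⟩, h1.trans h2.symm⟩, h1⟩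
    rw [heq, Finset.card_product, card_fiber]
  have key := Finset.card_filter_add_card_filter_not
    (s := A ×ˢ A) (p := fun q => q.1.1 ≠ q.2.1)
  simp only [not_not] at key hD
  rw [Finset.card_product, hA] at key
  rw [hS]
  omega

private lemma triples_count {n : ℕ} {m : Fin n → ℕ} (v : (i : Fin n) × Fin (m i)) :
    (univ.filter fun q : ((i : Fin n) × Fin (m i)) × ((i : Fin n) × Fin (m i)) =>
        q.1.1 ≠ q.2.1 ∧ q.1.1 ≠ v.1 ∧ q.2.1 ≠ v.1).card
    = 2 * (univ.filter fun T : {T : Finset ((i : Fin n) × Fin (m i)) //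
        T.card = 3 ∧ ∀ a ∈ T, ∀ b ∈ T, a.1 = b.1 → a = b} => v ∈ T.val).card := by
  classical
  set TT : Finset (Finset ((i : Fin n) × Fin (m i))) := univ.filter
    (fun T : Finset ((i : Fin n) × Fin (m i)) =>
      v ∈ T ∧ T.card = 3 ∧ ∀ a ∈ T, ∀ b ∈ T, a.1 = b.1 → a = b)
    with hTTdef
  have hsub : (univ.filter fun T : {T : Finset ((i : Fin n) × Fin (m i)) //
        T.card = 3 ∧ ∀ a ∈ T, ∀ b ∈ T, a.1 = b.1 → a = b} => v ∈ T.val).card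
      = TT.card := by
    apply Finset.card_bij (fun T _ => T.val)
    · intro T hT
      simp only [mem_filter, mem_univ, true_and, hTTdef] at *
      exact ⟨hT, T.2.1, T.2.2⟩
    · intro a _ b _ hab
      exact Subtype.ext hab
    · intro T hT
      simp only [mem_filter, mem_univ, true_and, hTTdef] at hT
      exact ⟨⟨T, hT.2.1, hT.2.2⟩, by simp [hT.1], rfl⟩
  rw [hsub]
  rw [Finset.card_eq_sum_card_fiberwise
    (f := fun q : ((i : Fin n) × Fin (m i)) × ((i : Fin n) × Fin (m i)) =>
      insert v (insert q.1 {q.2})) (t := TT) ?maps]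
  case maps =>
    intro q hq
    simp only [Finset.mem_coe, mem_filter, mem_univ, true_and] at hq
    obtain ⟨h1, h2, h3⟩ := hq
    have hv1 : v ≠ q.1 := fun h => h2 (by rw [h])
    have hv2 : v ≠ q.2 := fun h => h3 (by rw [h])
    have h12 : q.1 ≠ q.2 := fun h => h1 (by rw [h])
    simp only [hTTdef, Finset.mem_coe, mem_filter, mem_univ, true_and]
    refine ⟨by simp, ?_, ?_⟩
    · rw [Finset.card_insert_of_notMem (by simp [hv1, hv2]),
        Finset.card_insert_of_notMem (by simp [h12]), Finset.card_singleton]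
    · intro a ha b hb hab
      simp only [mem_insert, mem_singleton] at ha hb
      rcases ha with rfl | rfl | rfl <;> rcases hb with rfl | rfl | rfl
      · rfl
      · exact absurd hab.symm h2
      · exact absurd hab.symm h3
      · exact absurd hab h2
      · rfl
      · exact absurd hab h1
      · exact absurd hab h3
      · exact absurd hab.symm h1
      · rfl
  · rw [Finset.sum_congr rfl (fun T hT => ?_), Finset.sum_const, smul_eq_mul, mul_comm]
    simp only [hTTdef, mem_filter, mem_univ, true_and] at hT
    obtain ⟨hvT, hc3, hinj⟩ := hT
    have hec : (T.erase v).card = 2 := by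
      rw [Finset.card_erase_of_mem hvT, hc3]
    obtain ⟨u, w, huw, hew⟩ := Finset.card_eq_two.mp hec
    have huT : u ∈ T := Finset.mem_of_mem_erase (by rw [hew]; simp)
    have hwT : w ∈ T := Finset.mem_of_mem_erase (by rw [hew]; simp)
    have huv : u ≠ v := by
      have : u ∈ T.erase v := by rw [hew]; simp
      exact Finset.ne_of_mem_erase this
    have hwv : w ≠ v := by
      have : w ∈ T.erase v := by rw [hew]; simp
      exact Finset.ne_of_mem_erase this
    have hu1 : u.1 ≠ v.1 := fun h => huv (hinj u huT v hvT h)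
    have hw1 : w.1 ≠ v.1 := fun h => hwv (hinj w hwT v hvT h)
    have huw1 : u.1 ≠ w.1 := fun h => huw (hinj u huT w hwT h)
    have hTeq : insert v (insert u {w}) = T := by
      rw [show (insert u {w} : Finset ((i : Fin n) × Fin (m i))) = T.erase v from hew.symm]
      exact Finset.insert_erase hvT
    have hfib : ((univ.filter fun q : ((i : Fin n) × Fin (m i)) × ((i : Fin n) × Fin (m i)) =>
          q.1.1 ≠ q.2.1 ∧ q.1.1 ≠ v.1 ∧ q.2.1 ≠ v.1).filter
          fun q => insert v (insert q.1 {q.2}) = T)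
        = {(u, w), (w, u)} := by
      ext q
      simp only [mem_filter, mem_univ, true_and, mem_insert, mem_singleton]
      constructor
      · rintro ⟨⟨h1, h2, h3⟩, hq⟩
        have hq1T : q.1 ∈ T := by rw [← hq]; simp
        have hq2T : q.2 ∈ T := by rw [← hq]; simp
        have hq1v : q.1 ≠ v := fun h => h2 (by rw [h])
        have hq2v : q.2 ≠ v := fun h => h3 (by rw [h])
        have hq1 : q.1 ∈ T.erase v := Finset.mem_erase.mpr ⟨hq1v, hq1T⟩
        have hq2 : q.2 ∈ T.erase v := Finset.mem_erase.mpr ⟨hq2v, hq2T⟩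
        rw [hew] at hq1 hq2
        simp only [mem_insert, mem_singleton] at hq1 hq2
        have h12 : q.1 ≠ q.2 := fun h => h1 (by rw [h])
        rcases hq1 with h | h <;> rcases hq2 with h' | h'
        · exact absurd (h.trans h'.symm) h12
        · left; exact Prod.ext h h'
        · right; exact Prod.ext h h'
        · exact absurd (h.trans h'.symm) h12
      · rintro (rfl | rfl)
        · exact ⟨⟨huw1, hu1, hw1⟩, hTeq⟩
        · refine ⟨⟨fun h => huw1 h.symm, hw1, hu1⟩, ?_⟩
          rw [Finset.pair_comm u w] at hTeq
          exact hTeq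
    rw [hfib]
    rw [Finset.card_insert_of_notMem (by simp [huw]), Finset.card_singleton]

private lemma triples_count' {n : ℕ} {m : Fin n → ℕ} (i : Fin n) (x : Fin (m i)) :
    (univ.filter fun q : ((i : Fin n) × Fin (m i)) × ((i : Fin n) × Fin (m i)) =>
        q.1.1 ≠ q.2.1 ∧ q.1.1 ≠ i ∧ q.2.1 ≠ i).card
    = 2 * (univ.filter fun T : {T : Finset ((i : Fin n) × Fin (m i)) //
        T.card = 3 ∧ ∀ a ∈ T, ∀ b ∈ T, a.1 = b.1 → a = b} =>
          (⟨i, x⟩ : (i : Fin n) × Fin (m i)) ∈ T.val).card :=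
  triples_count ⟨i, x⟩

private lemma two_mul_choose_two (a : ℕ) : 2 * Nat.choose a 2 = a * (a - 1) := by
  rw [Nat.choose_two_right]
  apply Nat.mul_div_cancel'
  rcases a with _ | b
  · simp
  · simpa [Nat.succ_sub_one, mul_comm] using (Nat.even_mul_succ_self b).two_dvd

/-- **Necessity for `(r₁,…,r_k)`-factorization of `λK³_{m₁,…,m_n}`.**
The vertex set is `(i : Fin n) × Fin (m i)`, part `i` being the fiber over
`i`.  If `n ≥ 3` and there is a coloring `c` of the edges of
`λK³_{m₁,…,m_n}` (pairs `(T, l)` where `T` is a 3-element set of vertices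
lying in three pairwise distinct parts and `l ∈ Fin λ`) by colors in `Fin k`
such that every vertex is incident with exactly `r j` edges of each color
`j`, then all parts have a common size `M`, `3 ∣ rᵢ·M·n` for each `i`, and
`∑ rᵢ = λ·C(n-1,2)·M²`. -/
theorem lambdaKm1mn3_factorizable_necessary (n lam k : ℕ) (hn : 3 ≤ n)
    (hlam : 1 ≤ lam) (hk : 1 ≤ k)
    (m : Fin n → ℕ) (hm : ∀ i, 0 < m i)
    (r : Fin k → ℕ) (hr : ∀ i, 0 < r i)
    (hfact : ∃ c : {T : Finset ((i : Fin n) × Fin (m i)) //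
        T.card = 3 ∧ ∀ a ∈ T, ∀ b ∈ T, a.1 = b.1 → a = b} → Fin lam → Fin k,
      ∀ v : (i : Fin n) × Fin (m i), ∀ j : Fin k,
        (Finset.univ.filter
          fun p : {T : Finset ((i : Fin n) × Fin (m i)) //
              T.card = 3 ∧ ∀ a ∈ T, ∀ b ∈ T, a.1 = b.1 → a = b} × Fin lam =>
            v ∈ p.1.val ∧ c p.1 p.2 = j).card = r j) :
    ∃ M : ℕ, (∀ i : Fin n, m i = M) ∧
      (∀ i : Fin k, 3 ∣ r i * M * n) ∧
      ∑ i, r i = lam * Nat.choose (n - 1) 2 * M ^ 2 := by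
  classical
  obtain ⟨c, hc⟩ := hfact
  -- degree identity
  have hdeg : ∀ v : (i : Fin n) × Fin (m i),
      ∑ j : Fin k, r j = (univ.filter fun T : {T : Finset ((i : Fin n) × Fin (m i)) //
          T.card = 3 ∧ ∀ a ∈ T, ∀ b ∈ T, a.1 = b.1 → a = b} => v ∈ T.val).card * lam := by
    intro v
    have h1 : (univ.filter fun p : {T : Finset ((i : Fin n) × Fin (m i)) //
          T.card = 3 ∧ ∀ a ∈ T, ∀ b ∈ T, a.1 = b.1 → a = b} × Fin lam => v ∈ p.1.val)
        = (univ.filter fun T : {T : Finset ((i : Fin n) × Fin (m i)) //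
          T.card = 3 ∧ ∀ a ∈ T, ∀ b ∈ T, a.1 = b.1 → a = b} => v ∈ T.val) ×ˢ univ := by
      ext p
      simp [mem_product]
    have h2 : (univ.filter fun p : {T : Finset ((i : Fin n) × Fin (m i)) //
          T.card = 3 ∧ ∀ a ∈ T, ∀ b ∈ T, a.1 = b.1 → a = b} × Fin lam =>
          v ∈ p.1.val).card = ∑ j : Fin k, r j := by
      rw [Finset.card_eq_sum_card_fiberwise (f := fun p => c p.1 p.2)
        (t := univ) (fun x _ => mem_univ _)]
      refine Finset.sum_congr rfl fun j _ => ?_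
      rw [Finset.filter_filter]
      exact hc v j
    rw [← h2, h1, Finset.card_product, card_univ, Fintype.card_fin]
  -- all parts equal
  have hmm : ∀ i j : Fin n, m i = m j := by
    intro i j
    by_cases hij : i = j
    · rw [hij]
    · -- third index
      have ht : ∃ t : Fin n, t ≠ i ∧ t ≠ j := by
        by_contra h
        push_neg at h
        have hsub : (univ : Finset (Fin n)) ⊆ {i, j} := by
          intro t _
          simp only [mem_insert, mem_singleton]
          by_cases hti : t = i
          · exact Or.inl hti
          · exact Or.inr (h t hti)
        have h1 := Finset.card_le_card hsub
        have h2 : ({i, j} : Finset (Fin n)).card ≤ 2 := by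
          apply le_trans (Finset.card_insert_le _ _)
          simp
        rw [card_univ, Fintype.card_fin] at h1
        omega
      obtain ⟨t, hti, htj⟩ := ht
      have hbound : m i + m j + m t ≤ ∑ p, m p := by
        have hsub : ({i, j, t} : Finset (Fin n)) ⊆ univ := Finset.subset_univ _
        have := Finset.sum_le_sum_of_subset (f := m) hsub
        rwa [Finset.sum_insert (by simp [hij, Ne.symm hti]),
          Finset.sum_insert (by simp [Ne.symm htj]), Finset.sum_singleton,
          ← add_assoc] at this
      -- N equal
      have hNeq : (univ.filter fun T : {T : Finset ((i : Fin n) × Fin (m i)) //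
            T.card = 3 ∧ ∀ a ∈ T, ∀ b ∈ T, a.1 = b.1 → a = b} =>
              (⟨i, ⟨0, hm i⟩⟩ : (i : Fin n) × Fin (m i)) ∈ T.val).card
          = (univ.filter fun T : {T : Finset ((i : Fin n) × Fin (m i)) //
            T.card = 3 ∧ ∀ a ∈ T, ∀ b ∈ T, a.1 = b.1 → a = b} =>
              (⟨j, ⟨0, hm j⟩⟩ : (i : Fin n) × Fin (m i)) ∈ T.val).card := by
        have e1 := hdeg ⟨i, ⟨0, hm i⟩⟩
        have e2 := hdeg ⟨j, ⟨0, hm j⟩⟩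
        have : 0 < lam := hlam
        exact Nat.eq_of_mul_eq_mul_right this (by rw [← e1, e2])
      have Pi := pairs_count (m := m) i
      have Pj := pairs_count (m := m) j
      rw [triples_count' i ⟨0, hm i⟩] at Pi
      rw [triples_count' j ⟨0, hm j⟩] at Pj
      rw [hNeq] at Pi
      -- sums over erase
      have hEi := Finset.sum_erase_add univ m (mem_univ i)
      have hEj := Finset.sum_erase_add univ m (mem_univ j)
      have hQi := Finset.sum_erase_add univ (fun p => m p * m p) (mem_univ i)
      have hQj := Finset.sum_erase_add univ (fun p => m p * m p) (mem_univ j)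
      -- to integers
      set N : ℕ := (univ.filter fun T : {T : Finset ((i : Fin n) × Fin (m i)) //
            T.card = 3 ∧ ∀ a ∈ T, ∀ b ∈ T, a.1 = b.1 → a = b} =>
              (⟨j, ⟨0, hm j⟩⟩ : (i : Fin n) × Fin (m i)) ∈ T.val).card
      set Ei := ∑ p ∈ univ.erase i, m p
      set Ej := ∑ p ∈ univ.erase j, m p
      set Qi := ∑ p ∈ univ.erase i, m p * m p
      set Qj := ∑ p ∈ univ.erase j, m p * m p
      set S := ∑ p, m p
      set Q := ∑ p, m p * m p
      have hZ : ((m i : ℤ) - m j) * ((m i : ℤ) + m j - S) * 2 = 0 := by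
        have z1 : (Ei : ℤ) = S - m i := by
          have := hEi; push_cast [← this]; ring
        have z2 : (Ej : ℤ) = S - m j := by
          have := hEj; push_cast [← this]; ring
        have z3 : (Qi : ℤ) = Q - m i * m i := by
          have := hQi; push_cast [← this]; ring
        have z4 : (Qj : ℤ) = Q - m j * m j := by
          have := hQj; push_cast [← this]; ring
        have zi : (2 : ℤ) * N + Qi = Ei * Ei := by exact_mod_cast Pi
        have zj : (2 : ℤ) * N + Qj = Ej * Ej := by exact_mod_cast Pj
        rw [z1, z3] at zi
        rw [z2, z4] at zj
        linear_combination zj - zi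
      have hfac : ((m i : ℤ) - m j) * ((m i : ℤ) + m j - S) = 0 := by
        have := mul_eq_zero.mp hZ
        rcases this with h | h
        · exact h
        · norm_num at h
      have hlt : (m i : ℤ) + m j - S < 0 := by
        have : (m i : ℤ) + m j + m t ≤ S := by exact_mod_cast hbound
        have hmt : (0 : ℤ) < m t := by exact_mod_cast hm t
        linarith
      rcases mul_eq_zero.mp hfac with h | h
      · exact_mod_cast sub_eq_zero.mp h
      · exact absurd h (ne_of_lt hlt)
  refine ⟨m ⟨0, by omega⟩, fun i => hmm i _, ?_, ?_⟩
  · -- divisibility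
    intro j
    set M := m ⟨0, by omega⟩ with hM
    have hcardV : Fintype.card ((i : Fin n) × Fin (m i)) = n * M := by
      rw [Fintype.card_sigma]
      simp only [Fintype.card_fin]
      rw [Finset.sum_congr rfl (fun i _ => hmm i ⟨0, by omega⟩), Finset.sum_const,
        card_univ, Fintype.card_fin, smul_eq_mul]
    have hdc : 3 * ((univ.filter fun p : {T : Finset ((i : Fin n) × Fin (m i)) //
          T.card = 3 ∧ ∀ a ∈ T, ∀ b ∈ T, a.1 = b.1 → a = b} × Fin lam =>
            c p.1 p.2 = j).card) = r j * (n * M) := by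
      have lhs : ∑ v : (i : Fin n) × Fin (m i),
          (univ.filter fun p : {T : Finset ((i : Fin n) × Fin (m i)) //
            T.card = 3 ∧ ∀ a ∈ T, ∀ b ∈ T, a.1 = b.1 → a = b} × Fin lam =>
              v ∈ p.1.val ∧ c p.1 p.2 = j).card
          = 3 * ((univ.filter fun p : {T : Finset ((i : Fin n) × Fin (m i)) //
              T.card = 3 ∧ ∀ a ∈ T, ∀ b ∈ T, a.1 = b.1 → a = b} × Fin lam =>
                c p.1 p.2 = j).card) := by
        simp only [Finset.card_filter]
        rw [Finset.sum_comm]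
        rw [Finset.mul_sum]
        refine Finset.sum_congr rfl fun p _ => ?_
        by_cases hcp : c p.1 p.2 = j
        · simp only [hcp, and_true, if_true]
          rw [Finset.sum_ite_mem, Finset.univ_inter, Finset.sum_const, smul_eq_mul,
            mul_one, p.1.2.1, mul_one]
        · simp [hcp]
      have rhs : ∑ v : (i : Fin n) × Fin (m i),
          (univ.filter fun p : {T : Finset ((i : Fin n) × Fin (m i)) //
            T.card = 3 ∧ ∀ a ∈ T, ∀ b ∈ T, a.1 = b.1 → a = b} × Fin lam =>
              v ∈ p.1.val ∧ c p.1 p.2 = j).card = r j * (n * M) := by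
        rw [Finset.sum_congr rfl (fun v _ => hc v j), Finset.sum_const, card_univ,
          hcardV, smul_eq_mul, mul_comm]
      rw [← lhs, rhs]
    refine ⟨(univ.filter fun p : {T : Finset ((i : Fin n) × Fin (m i)) //
          T.card = 3 ∧ ∀ a ∈ T, ∀ b ∈ T, a.1 = b.1 → a = b} × Fin lam =>
            c p.1 p.2 = j).card, ?_⟩
    rw [hdc]
    ring
  · -- sum formula
    set i0 : Fin n := ⟨0, by omega⟩ with hi0
    set M := m i0 with hM
    have hcard_erase : (univ.erase i0).card = n - 1 := by
      rw [Finset.card_erase_of_mem (mem_univ _), card_univ, Fintype.card_fin]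
    have hE : ∑ p ∈ univ.erase i0, m p = (n - 1) * M := by
      rw [Finset.sum_congr rfl (fun p _ => hmm p i0), Finset.sum_const, hcard_erase,
        smul_eq_mul]
    have hQ : ∑ p ∈ univ.erase i0, m p * m p = (n - 1) * (M * M) := by
      rw [Finset.sum_congr rfl (fun p _ => by rw [hmm p i0]), Finset.sum_const,
        hcard_erase, smul_eq_mul]
    have P0 := pairs_count (m := m) i0
    rw [triples_count' i0 ⟨0, hm i0⟩, hE, hQ] at P0
    set N : ℕ := (univ.filter fun T : {T : Finset ((i : Fin n) × Fin (m i)) //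
          T.card = 3 ∧ ∀ a ∈ T, ∀ b ∈ T, a.1 = b.1 → a = b} =>
            (⟨i0, ⟨0, hm i0⟩⟩ : (i : Fin n) × Fin (m i)) ∈ T.val).card with hN
    have hNval : N = Nat.choose (n - 1) 2 * M ^ 2 := by
      have h2N : 2 * N = (n - 1) * ((n - 1) - 1) * M ^ 2 := by
        have expand : (↑(n-1) : ℤ) * M * ((↑(n-1) : ℤ) * M)
            = (↑(n-1) : ℤ) * ((↑(n-1) : ℤ) - 1) * M ^ 2 + (↑(n-1) : ℤ) * (M * M) := by
          ring
        have hn1 : (1 : ℕ) ≤ n - 1 := by omega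
        have z : (2 : ℤ) * N + (↑(n-1) : ℤ) * (M * M)
            = (↑(n-1) : ℤ) * M * ((↑(n-1) : ℤ) * M) := by exact_mod_cast P0
        have zz : (2 : ℤ) * N = (↑(n-1) : ℤ) * ((↑(n-1) : ℤ) - 1) * M ^ 2 := by
          linarith [z, expand]
        have cast1 : ((↑(n-1) : ℤ) - 1) = ((n - 1 - 1 : ℕ) : ℤ) := by
          omega
        rw [cast1] at zz
        exact_mod_cast zz
      have hch := two_mul_choose_two (n - 1)
      have : 2 * N = 2 * (Nat.choose (n - 1) 2 * M ^ 2) := by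
        rw [h2N, ← mul_assoc, ← hch]
        try ring
      omega
    have := hdeg ⟨i0, ⟨0, hm i0⟩⟩
    rw [← hN] at this
    rw [this, hNval]
    ring
end

section
/- Let n ≥ 3, let λ ≥ 1 and let r be a positive integer. Then λK_n^3 is r-factorizable — i.e., there exists k ≥ 1 and a function c assigning to each pair (T, l), with T ⊆ Fin n, |T| = 3 and l ∈ Fin λ, a color in {1,…,k} such that for every vertex v and every color j the number of pairs (T, l) with v ∈ T and c(T, l) = j equals r — if and only if 3 divides r·n and r divides λ·C(n−1, 2). -/
open Finset

namespace LambdaKn3Aux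


variable {α : Type*} [DecidableEq α]

lemma sum_ite_add_one (A : Finset α) (f : α → ℕ) (a : α) (ha : a ∈ A) :
    ∑ x ∈ A, (if x = a then f x + 1 else f x) = (∑ x ∈ A, f x) + 1 := by
  rw [← Finset.add_sum_erase _ (fun x => if x = a then f x + 1 else f x) ha,
    ← Finset.add_sum_erase _ f ha, if_pos rfl,
    Finset.sum_congr rfl (fun x hx => if_neg (Finset.ne_of_mem_erase hx))]
  have h : ∑ x ∈ A.erase a, f x = (A.erase a).sum f := rfl
  omega

lemma sum_ite_sub_one (A : Finset α) (f : α → ℕ) (a : α) (ha : a ∈ A) (hf : 0 < f a) :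
    ∑ x ∈ A, (if x = a then f x - 1 else f x) + 1 = ∑ x ∈ A, f x := by
  rw [← Finset.add_sum_erase _ (fun x => if x = a then f x - 1 else f x) ha,
    ← Finset.add_sum_erase _ f ha, if_pos rfl,
    Finset.sum_congr rfl (fun x hx => if_neg (Finset.ne_of_mem_erase hx))]
  have h : ∑ x ∈ A.erase a, f x = (A.erase a).sum f := rfl
  omega

lemma sum_ite_of_not_mem (A : Finset α) (f g : α → ℕ) (a : α) (ha : a ∉ A) :
    ∑ x ∈ A, (if x = a then g x else f x) = ∑ x ∈ A, f x :=
  Finset.sum_congr rfl fun x hx => if_neg (by rintro rfl; exact ha hx)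

section Transport

variable {I J : Type*} [Fintype I] [Fintype J] [DecidableEq I] [DecidableEq J]

/-- Integral capacitated transportation: if the Gale–Hoffman type condition holds,
an integral matrix with prescribed row sums, column sums and capacities exists. -/
theorem transport (N : ℕ) : ∀ (m : I → J → ℕ) (R : I → ℕ) (C : J → ℕ),
    ∑ i, R i = N → ∑ i, R i = ∑ j, C j →
    (∀ (A : Finset I) (B : Finset J),
      ∑ i ∈ A, R i ≤ (∑ i ∈ A, ∑ j ∈ B, m i j) + ∑ j ∈ Bᶜ, C j) →
    ∃ y : I → J → ℕ, (∀ i j, y i j ≤ m i j) ∧ (∀ i, ∑ j, y i j = R i) ∧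
      (∀ j, ∑ i, y i j = C j) := by
  induction N using Nat.strong_induction_on with
  | _ N ih =>
  intro m R C hN hbal hP
  rcases Nat.eq_zero_or_pos N with h0 | hpos
  · subst h0
    have hR : ∀ i, R i = 0 := fun i =>
      (Finset.sum_eq_zero_iff.mp hN) i (mem_univ i)
    have hC : ∀ j, C j = 0 := fun j =>
      (Finset.sum_eq_zero_iff.mp (hbal.symm.trans hN)) j (mem_univ j)
    exact ⟨fun _ _ => 0, fun _ _ => Nat.zero_le _, fun i => by simp [hR i],
      fun j => by simp [hC j]⟩
  obtain ⟨i0, hi0⟩ : ∃ i, 0 < R i := by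
    by_contra h; push_neg at h
    have : ∑ i, R i = 0 := Finset.sum_eq_zero fun i _ => Nat.le_zero.mp (h i)
    omega
  -- submodularity of the right-hand side
  have key : ∀ (A : Finset I) (B : Finset J),
      ∑ i ∈ A, ∑ j ∈ B, m i j
        = ∑ i, ∑ j, (if i ∈ A then if j ∈ B then m i j else 0 else 0) := by
    intro A B
    have inner : ∀ i, (∑ j, (if i ∈ A then if j ∈ B then m i j else 0 else 0))
        = if i ∈ A then ∑ j ∈ B, m i j else 0 := by
      intro i
      by_cases hi : i ∈ A
      · simp only [hi, if_true]
        rw [Finset.sum_ite_mem, Finset.univ_inter]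
      · simp [hi]
    rw [Finset.sum_congr rfl fun i _ => inner i, Finset.sum_ite_mem, Finset.univ_inter]
  have hmod : ∀ (A1 A2 : Finset I) (B1 B2 : Finset J),
      ((∑ i ∈ A1 ∪ A2, ∑ j ∈ B1 ∩ B2, m i j) + ∑ j ∈ (B1 ∩ B2)ᶜ, C j)
        + ((∑ i ∈ A1 ∩ A2, ∑ j ∈ B1 ∪ B2, m i j) + ∑ j ∈ (B1 ∪ B2)ᶜ, C j) ≤
      ((∑ i ∈ A1, ∑ j ∈ B1, m i j) + ∑ j ∈ B1ᶜ, C j)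
        + ((∑ i ∈ A2, ∑ j ∈ B2, m i j) + ∑ j ∈ B2ᶜ, C j) := by
    intro A1 A2 B1 B2
    have hC : ∑ j ∈ (B1 ∩ B2)ᶜ, C j + ∑ j ∈ (B1 ∪ B2)ᶜ, C j
        = ∑ j ∈ B1ᶜ, C j + ∑ j ∈ B2ᶜ, C j := by
      rw [Finset.compl_inter, Finset.compl_union]
      exact Finset.sum_union_inter
    have hm : (∑ i ∈ A1 ∪ A2, ∑ j ∈ B1 ∩ B2, m i j) + ∑ i ∈ A1 ∩ A2, ∑ j ∈ B1 ∪ B2, m i j ≤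
        (∑ i ∈ A1, ∑ j ∈ B1, m i j) + ∑ i ∈ A2, ∑ j ∈ B2, m i j := by
      rw [key A1 B1, key A2 B2, key (A1 ∪ A2) (B1 ∩ B2), key (A1 ∩ A2) (B1 ∪ B2),
        ← Finset.sum_add_distrib, ← Finset.sum_add_distrib]
      refine Finset.sum_le_sum fun i _ => ?_
      rw [← Finset.sum_add_distrib, ← Finset.sum_add_distrib]
      refine Finset.sum_le_sum fun j _ => ?_
      by_cases h1 : i ∈ A1 <;> by_cases h2 : i ∈ A2 <;>
        by_cases h3 : j ∈ B1 <;> by_cases h4 : j ∈ B2 <;>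
        simp [h1, h2, h3, h4] <;> omega
    omega
  classical
  -- the family of tight pairs avoiding i0
  set T : Finset (Finset I × Finset J) :=
    univ.filter (fun p => i0 ∉ p.1 ∧ ∑ i ∈ p.1, R i
      = (∑ i ∈ p.1, ∑ j ∈ p.2, m i j) + ∑ j ∈ p.2ᶜ, C j) with hT
  have hmemT : ∀ p : Finset I × Finset J, p ∈ T ↔ i0 ∉ p.1 ∧ ∑ i ∈ p.1, R i
      = (∑ i ∈ p.1, ∑ j ∈ p.2, m i j) + ∑ j ∈ p.2ᶜ, C j := by
    intro p; simp [hT]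
  have hTne : (∅, (univ : Finset J)) ∈ T := by
    rw [hmemT]
    refine ⟨Finset.notMem_empty _, by simp⟩
  have hclose : ∀ p ∈ T, ∀ q ∈ T, (p.1 ∪ q.1, p.2 ∩ q.2) ∈ T := by
    intro p hp q hq
    rw [hmemT] at hp hq ⊢
    obtain ⟨hp1, hp2⟩ := hp; obtain ⟨hq1, hq2⟩ := hq
    have hsum : ∑ i ∈ p.1 ∪ q.1, R i + ∑ i ∈ p.1 ∩ q.1, R i
        = ∑ i ∈ p.1, R i + ∑ i ∈ q.1, R i := Finset.sum_union_inter
    have h1 := hP (p.1 ∪ q.1) (p.2 ∩ q.2)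
    have h2 := hP (p.1 ∩ q.1) (p.2 ∪ q.2)
    have h3 := hmod p.1 q.1 p.2 q.2
    dsimp only
    refine ⟨fun h => ?_, by omega⟩
    rcases Finset.mem_union.mp h with h | h
    · exact hp1 h
    · exact hq1 h
  have hsupinf : ∀ s : Finset (Finset I × Finset J), s.Nonempty → (∀ p ∈ s, p ∈ T) →
      (s.sup Prod.fst, s.inf Prod.snd) ∈ T := by
    intro s
    induction s using Finset.cons_induction with
    | empty => intro h; exact absurd h (by simp)
    | cons a s ha ihs =>
      intro _ hall
      rcases s.eq_empty_or_nonempty with rfl | hs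
      · simpa using hall a (Finset.mem_cons_self a ∅)
      · have h1 := ihs hs fun p hp => hall p (Finset.mem_cons.mpr (Or.inr hp))
        have h2 := hclose a (hall a (Finset.mem_cons_self a s)) _ h1
        simpa [Finset.sup_cons, Finset.inf_cons] using h2
  have hA0B0 := hsupinf T ⟨_, hTne⟩ fun p hp => hp
  rw [hmemT] at hA0B0
  dsimp only at hA0B0
  set A0 : Finset I := T.sup Prod.fst with hA0def
  set B0 : Finset J := T.inf Prod.snd with hB0def
  obtain ⟨hi0A0, htight⟩ := hA0B0
  -- choose j0
  set B' : Finset J := B0.filter (fun j => C j ≠ 0) with hB'def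
  have hkey := hP (insert i0 A0) B'
  have h1 : ∑ i ∈ insert i0 A0, R i = R i0 + ∑ i ∈ A0, R i := Finset.sum_insert hi0A0
  have h2 : ∑ j ∈ B'ᶜ, C j = ∑ j ∈ B0ᶜ, C j := by
    have e1 : ∑ j ∈ B', C j = ∑ j ∈ B0, C j := Finset.sum_filter_ne_zero _
    have e2 := Finset.sum_add_sum_compl B' C
    have e3 := Finset.sum_add_sum_compl B0 C
    omega
  have h3 : ∑ i ∈ insert i0 A0, ∑ j ∈ B', m i j
      = (∑ j ∈ B', m i0 j) + ∑ i ∈ A0, ∑ j ∈ B', m i j :=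
    Finset.sum_insert hi0A0
  have h4 : ∑ i ∈ A0, ∑ j ∈ B', m i j ≤ ∑ i ∈ A0, ∑ j ∈ B0, m i j :=
    Finset.sum_le_sum fun i _ =>
      Finset.sum_le_sum_of_subset (Finset.filter_subset _ _)
  have hmain : R i0 ≤ ∑ j ∈ B', m i0 j := by omega
  obtain ⟨j0, hj0B', hj0m⟩ : ∃ j0 ∈ B', m i0 j0 ≠ 0 := by
    by_contra h; push_neg at h
    have : ∑ j ∈ B', m i0 j = 0 := Finset.sum_eq_zero fun j hj => h j hj
    omega
  have hj0B0 : j0 ∈ B0 := Finset.mem_of_mem_filter _ hj0B'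
  have hj0C : C j0 ≠ 0 := by
    have := Finset.mem_filter.mp hj0B'
    exact this.2
  have hj0T : ∀ p ∈ T, j0 ∈ p.2 := by
    intro p hp
    have hle : B0 ≤ p.2 := Finset.inf_le hp
    exact hle hj0B0
  have hm0 : 0 < m i0 j0 := Nat.pos_of_ne_zero hj0m
  have hC0 : 0 < C j0 := Nat.pos_of_ne_zero hj0C
  set R' : I → ℕ := fun i => if i = i0 then R i - 1 else R i with hR'def
  set C' : J → ℕ := fun j => if j = j0 then C j - 1 else C j with hC'def
  set m' : I → J → ℕ := fun i j => if i = i0 then (if j = j0 then m i j - 1 else m i j)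
    else m i j with hm'def
  -- basic sum identities for the decremented data
  have hRA : ∀ A : Finset I, i0 ∈ A → ∑ i ∈ A, R' i + 1 = ∑ i ∈ A, R i := by
    intro A hA; exact sum_ite_sub_one A R i0 hA hi0
  have hRA' : ∀ A : Finset I, i0 ∉ A → ∑ i ∈ A, R' i = ∑ i ∈ A, R i := by
    intro A hA; exact sum_ite_of_not_mem A R _ i0 hA
  have hCB : ∀ B : Finset J, j0 ∈ B → ∑ j ∈ B, C' j + 1 = ∑ j ∈ B, C j := by
    intro B hB; exact sum_ite_sub_one B C j0 hB hC0
  have hCB' : ∀ B : Finset J, j0 ∉ B → ∑ j ∈ B, C' j = ∑ j ∈ B, C j := by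
    intro B hB; exact sum_ite_of_not_mem B C _ j0 hB
  have hrow : ∀ (B : Finset J) (i : I), i ≠ i0 → ∑ j ∈ B, m' i j = ∑ j ∈ B, m i j := by
    intro B i hi
    exact Finset.sum_congr rfl fun j _ => by simp [hm'def, hi]
  have hrow0in : ∀ B : Finset J, j0 ∈ B → ∑ j ∈ B, m' i0 j + 1 = ∑ j ∈ B, m i0 j := by
    intro B hB
    have e : ∀ j ∈ B, m' i0 j = if j = j0 then m i0 j - 1 else m i0 j := by
      intro j _; simp [hm'def]
    rw [Finset.sum_congr rfl e]
    exact sum_ite_sub_one B (m i0) j0 hB hm0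
  have hrow0out : ∀ B : Finset J, j0 ∉ B → ∑ j ∈ B, m' i0 j = ∑ j ∈ B, m i0 j := by
    intro B hB
    have e : ∀ j ∈ B, m' i0 j = if j = j0 then m i0 j - 1 else m i0 j := by
      intro j _; simp [hm'def]
    rw [Finset.sum_congr rfl e]
    exact sum_ite_of_not_mem B (m i0) _ j0 hB
  have hddin : ∀ (A : Finset I) (B : Finset J), i0 ∈ A → j0 ∈ B →
      (∑ i ∈ A, ∑ j ∈ B, m' i j) + 1 = ∑ i ∈ A, ∑ j ∈ B, m i j := by
    intro A B hA hB
    have e1 := Finset.add_sum_erase A (fun i => ∑ j ∈ B, m' i j) hA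
    have e2 := Finset.add_sum_erase A (fun i => ∑ j ∈ B, m i j) hA
    have e3 : ∑ i ∈ A.erase i0, ∑ j ∈ B, m' i j = ∑ i ∈ A.erase i0, ∑ j ∈ B, m i j :=
      Finset.sum_congr rfl fun i hi => hrow B i (Finset.ne_of_mem_erase hi)
    have e4 := hrow0in B hB
    have r1 : ∑ x ∈ A.erase i0, (fun i => ∑ j ∈ B, m' i j) x
        = ∑ i ∈ A.erase i0, ∑ j ∈ B, m' i j := rfl
    have r2 : ∑ x ∈ A.erase i0, (fun i => ∑ j ∈ B, m i j) x
        = ∑ i ∈ A.erase i0, ∑ j ∈ B, m i j := rfl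
    have r3 : ∑ x ∈ A, (fun i => ∑ j ∈ B, m' i j) x = ∑ i ∈ A, ∑ j ∈ B, m' i j := rfl
    have r4 : ∑ x ∈ A, (fun i => ∑ j ∈ B, m i j) x = ∑ i ∈ A, ∑ j ∈ B, m i j := rfl
    have r5 : (fun i => ∑ j ∈ B, m' i j) i0 = ∑ j ∈ B, m' i0 j := rfl
    have r6 : (fun i => ∑ j ∈ B, m i j) i0 = ∑ j ∈ B, m i0 j := rfl
    omega
  have hddA : ∀ (A : Finset I) (B : Finset J), i0 ∉ A →
      ∑ i ∈ A, ∑ j ∈ B, m' i j = ∑ i ∈ A, ∑ j ∈ B, m i j := by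
    intro A B hA
    exact Finset.sum_congr rfl fun i hi => hrow B i (by rintro rfl; exact hA hi)
  have hddB : ∀ (A : Finset I) (B : Finset J), j0 ∉ B →
      ∑ i ∈ A, ∑ j ∈ B, m' i j = ∑ i ∈ A, ∑ j ∈ B, m i j := by
    intro A B hB
    refine Finset.sum_congr rfl fun i _ => ?_
    by_cases hi : i = i0
    · subst hi; exact hrow0out B hB
    · exact hrow B i hi
  -- the condition for the decremented data
  have hP' : ∀ (A : Finset I) (B : Finset J),
      ∑ i ∈ A, R' i ≤ (∑ i ∈ A, ∑ j ∈ B, m' i j) + ∑ j ∈ Bᶜ, C' j := by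
    intro A B
    have hold := hP A B
    by_cases hiA : i0 ∈ A <;> by_cases hjB : j0 ∈ B
    · have e1 := hRA A hiA
      have e2 := hddin A B hiA hjB
      have e3 := hCB' Bᶜ (by simp [hjB])
      omega
    · have e1 := hRA A hiA
      have e2 := hddB A B hjB
      have e3 := hCB Bᶜ (by simp [hjB])
      omega
    · have e1 := hRA' A hiA
      have e2 := hddA A B hiA
      have e3 := hCB' Bᶜ (by simp [hjB])
      omega
    · have e1 := hRA' A hiA
      have e2 := hddA A B hiA
      have e3 := hCB Bᶜ (by simp [hjB])
      have hnt : ∑ i ∈ A, R i ≠ (∑ i ∈ A, ∑ j ∈ B, m i j) + ∑ j ∈ Bᶜ, C j := by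
        intro ht
        exact hjB (hj0T (A, B) (by rw [hmemT]; exact ⟨hiA, ht⟩))
      omega
  have hsumR' : ∑ i, R' i + 1 = ∑ i, R i := hRA univ (mem_univ i0)
  have hsumC' : ∑ j, C' j + 1 = ∑ j, C j := hCB univ (mem_univ j0)
  obtain ⟨y', hy'le, hy'row, hy'col⟩ :=
    ih (N - 1) (by omega) m' R' C' (by omega) (by omega) hP'
  refine ⟨fun i j => if i = i0 then (if j = j0 then y' i j + 1 else y' i j) else y' i j,
    ?_, ?_, ?_⟩
  · intro i j
    dsimp only
    have h := hy'le i j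
    by_cases hi : i = i0
    · by_cases hj : j = j0
      · have hm' : m' i0 j0 = m i0 j0 - 1 := by simp [hm'def]
        simp only [hi, hj] at h
        simp only [hi, hj, eq_self_iff_true, if_true]
        omega
      · have hm' : m' i0 j = m i0 j := by simp [hm'def, hj]
        simp only [hi] at h
        simp only [hi, hj, eq_self_iff_true, if_true, if_false]
        omega
    · have hm' : m' i j = m i j := by simp [hm'def, hi]
      simp only [hi, if_false]
      omega
  · intro i
    dsimp only
    by_cases hi : i = i0
    · have e1 : ∑ j, (if j = j0 then y' i0 j + 1 else y' i0 j) = (∑ j, y' i0 j) + 1 :=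
        sum_ite_add_one univ (y' i0) j0 (mem_univ j0)
      have e2 := hy'row i0
      have e3 : R' i0 = R i0 - 1 := by simp [hR'def]
      simp only [hi, eq_self_iff_true, if_true]
      omega
    · have e2 := hy'row i
      have e3 : R' i = R i := by simp [hR'def, hi]
      simp only [hi, if_false]
      omega
  · intro j
    dsimp only
    by_cases hj : j = j0
    · have e1 : ∑ i, (if i = i0 then y' i j0 + 1 else y' i j0) = (∑ i, y' i j0) + 1 :=
        sum_ite_add_one univ (fun i => y' i j0) i0 (mem_univ i0)
      have e2 := hy'col j0
      have e3 : C' j0 = C j0 - 1 := by simp [hC'def]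
      simp only [hj, eq_self_iff_true, if_true]
      omega
    · have e4 : ∑ i, (if i = i0 then (if j = j0 then y' i j + 1 else y' i j) else y' i j)
          = ∑ i, y' i j := by
        refine Finset.sum_congr rfl fun i _ => ?_
        by_cases hi : i = i0 <;> simp [hi, hj]
      have e2 := hy'col j
      have e3 : C' j = C j := by simp [hC'def, hj]
      omega

end Transport



lemma card_filter_val_lt (M s : ℕ) (hs : s ≤ M) :
    (univ.filter (fun v : Fin M => v.val < s)).card = s := by
  rw [← Fintype.card_subtype]
  have e : {v : Fin M // v.val < s} ≃ Fin s :=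
    ⟨fun v => ⟨v.1.val, v.2⟩, fun x => ⟨⟨x.val, Nat.lt_of_lt_of_le x.isLt hs⟩, x.isLt⟩,
      fun _ => rfl, fun _ => rfl⟩
  rw [Fintype.card_congr e, Fintype.card_fin]

private def elig (s : ℕ) {M : ℕ} (S : Finset (Fin M)) : Prop :=
  S.card ≤ 2 ∧ ∀ v ∈ S, v.val < s

private instance (s M : ℕ) (S : Finset (Fin M)) : Decidable (elig s S) := by
  unfold elig; infer_instance

lemma stage (M lam r k a : ℕ) (hM : 0 < M)
    (ha3 : 3 * a = r * M) (hka : k * a = lam * Nat.choose M 3) :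
    ∀ s, s ≤ M → ∃ F : Fin k → Finset (Fin M) → ℕ,
      (∀ i S, F i S ≠ 0 → S.card ≤ 3 ∧ ∀ v ∈ S, v.val < s) ∧
      (∀ S : Finset (Fin M), S.card ≤ 3 → (∀ v ∈ S, v.val < s) →
        ∑ i, F i S = lam * Nat.choose (M - s) (3 - S.card)) ∧
      (∀ i, ∑ S, F i S = a) ∧
      (∀ i, ∀ v : Fin M, v.val < s →
        ∑ S ∈ univ.filter (fun S : Finset (Fin M) => v ∈ S), F i S = r) := by
  intro s
  induction s with
  | zero =>
    intro _
    refine ⟨fun _ S => if S = ∅ then a else 0, ?_, ?_, ?_, ?_⟩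
    · intro i S h
      by_cases hS : S = ∅
      · subst hS; exact ⟨by simp, by simp⟩
      · simp [hS] at h
    · intro S _ hv
      have hS : S = ∅ := by
        rw [Finset.eq_empty_iff_forall_notMem]
        intro v hvS
        exact absurd (hv v hvS) (by omega)
      subst hS
      simp only [Finset.card_empty, Nat.sub_zero, if_pos rfl]
      rw [Finset.sum_const, card_univ, Fintype.card_fin, smul_eq_mul]
      simpa using hka
    · intro i; simp
    · intro i v hv; omega
  | succ s ihs =>
    intro hs1
    obtain ⟨F, hsupp, hcol, htot, hdeg⟩ := ihs (by omega)
    have hsM : s < M := hs1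
    set w : Fin M := ⟨s, hsM⟩ with hwdef
    have hwval : w.val = s := rfl
    set m : Fin k → Finset (Fin M) → ℕ :=
      fun i S => if elig s S then F i S else 0 with hm
    set Cc : Finset (Fin M) → ℕ :=
      fun S => if elig s S then lam * Nat.choose (M - s - 1) (2 - S.card) else 0 with hCc
    have hsub1 : M - s = (M - s - 1) + 1 := by omega
    have hFz : ∀ i S, (¬ ∀ v ∈ S, v.val < s) → F i S = 0 := by
      intro i S h
      by_contra hF
      exact h (hsupp i S hF).2
    have hFz3 : ∀ i (S : Finset (Fin M)), 3 < S.card → F i S = 0 := by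
      intro i S h
      by_contra hF
      have := (hsupp i S hF).1; omega
    have hX0 : ∀ i S, ¬ elig s S → F i S * (3 - S.card) = 0 := by
      intro i S he
      by_cases hv : ∀ v ∈ S, v.val < s
      · have hcge : 3 ≤ S.card := by
          by_contra h
          exact he ⟨by omega, hv⟩
        rcases Nat.eq_or_lt_of_le hcge with h3 | h3
        · rw [← h3]; simp
        · rw [hFz3 i S h3]; simp
      · rw [hFz i S hv]; simp
    have hXle : ∀ i S, F i S * (3 - S.card) ≤ (M - s) * m i S := by
      intro i S
      by_cases he : elig s S
      · simp only [hm, if_pos he]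
        by_cases hF : F i S = 0
        · simp [hF]
        · have h3 : 3 - S.card ≤ M - s := by
            by_contra hlt
            push_neg at hlt
            have h0 : Nat.choose (M - s) (3 - S.card) = 0 := Nat.choose_eq_zero_of_lt hlt
            have hcS := hcol S (le_trans he.1 (by omega)) he.2
            rw [h0, Nat.mul_zero] at hcS
            exact hF ((Finset.sum_eq_zero_iff.mp hcS) i (mem_univ i))
          calc F i S * (3 - S.card) ≤ F i S * (M - s) := Nat.mul_le_mul_left _ h3
            _ = (M - s) * F i S := Nat.mul_comm _ _
      · simp only [hm, if_neg he, Nat.mul_zero]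
        exact Nat.le_of_eq (hX0 i S he)
    have hXrow : ∀ i, ∑ S, F i S * (3 - S.card) = (M - s) * r := by
      intro i
      have h1 : ∀ S : Finset (Fin M), F i S * (3 - S.card) + F i S * S.card = 3 * F i S := by
        intro S
        by_cases hF : F i S = 0
        · simp [hF]
        · have hc := (hsupp i S hF).1
          rw [← Nat.left_distrib]
          have e : 3 - S.card + S.card = 3 := by omega
          rw [e, Nat.mul_comm]
      have h2 : ∑ S, (F i S * (3 - S.card) + F i S * S.card) = ∑ S : Finset (Fin M), 3 * F i S :=
        Finset.sum_congr rfl fun S _ => h1 S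
      rw [Finset.sum_add_distrib, ← Finset.mul_sum, htot i] at h2
      have h3 : ∑ S, F i S * S.card = s * r := by
        have step1 : ∑ S, F i S * S.card
            = ∑ S : Finset (Fin M), ∑ v, (if v ∈ S then F i S else 0) := by
          refine Finset.sum_congr rfl fun S _ => ?_
          have hcard : S.card = ∑ v, (if v ∈ S then 1 else 0) := by
            rw [Finset.sum_ite_mem, Finset.univ_inter]
            simp
          rw [hcard, Finset.mul_sum]
          refine Finset.sum_congr rfl fun v _ => ?_
          by_cases hv : v ∈ S <;> simp [hv]
        rw [step1, Finset.sum_comm]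
        have step2 : ∀ v : Fin M, ∑ S : Finset (Fin M), (if v ∈ S then F i S else 0)
            = if v.val < s then r else 0 := by
          intro v
          rw [← Finset.sum_filter]
          by_cases hv : v.val < s
          · rw [if_pos hv]; exact hdeg i v hv
          · rw [if_neg hv]
            exact Finset.sum_eq_zero fun S hS =>
              hFz i S (fun hall => hv (hall v (Finset.mem_filter.mp hS).2))
        rw [Finset.sum_congr rfl fun v _ => step2 v, ← Finset.sum_filter,
          Finset.sum_const, card_filter_val_lt M s (by omega), smul_eq_mul]
      have e1 := Nat.sub_mul M s r
      have e2 : r * M = M * r := Nat.mul_comm r M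
      omega
    have hxcolX : ∀ S : Finset (Fin M), ∑ i, F i S * (3 - S.card) = (M - s) * Cc S := by
      intro S
      by_cases he : elig s S
      · have hcS : ∑ i, F i S = lam * Nat.choose (M - s) (3 - S.card) :=
          hcol S (le_trans he.1 (by omega)) he.2
        have h1 : 2 - S.card + 1 = 3 - S.card := by have := he.1; omega
        have hid : (M - s) * Nat.choose (M - s - 1) (2 - S.card)
            = Nat.choose (M - s) (3 - S.card) * (3 - S.card) := by
          have h0 := Nat.add_one_mul_choose_eq (M - s - 1) (2 - S.card)
          rw [← hsub1] at h0
          rw [h1] at h0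
          exact h0
        rw [← Finset.sum_mul, hcS]
        simp only [hCc, if_pos he]
        rw [Nat.mul_assoc, ← hid]
        ring
      · simp only [hCc, if_neg he, Nat.mul_zero]
        exact Finset.sum_eq_zero fun i _ => hX0 i S he
    have hbal : ∑ _i : Fin k, r = ∑ S, Cc S := by
      have hb1 : (M - s) * (∑ S, Cc S) = (M - s) * (∑ _i : Fin k, r) := by
        rw [Finset.mul_sum, Finset.mul_sum]
        calc ∑ S, (M - s) * Cc S = ∑ S : Finset (Fin M), ∑ i, F i S * (3 - S.card) :=
              Finset.sum_congr rfl fun S _ => (hxcolX S).symm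
          _ = ∑ i, ∑ S, F i S * (3 - S.card) := Finset.sum_comm
          _ = ∑ _i : Fin k, (M - s) * r := Finset.sum_congr rfl fun i _ => hXrow i
      exact (Nat.eq_of_mul_eq_mul_left (by omega) hb1).symm
    have hP : ∀ (A : Finset (Fin k)) (B : Finset (Finset (Fin M))),
        ∑ _i ∈ A, r ≤ (∑ i ∈ A, ∑ S ∈ B, m i S) + ∑ S ∈ Bᶜ, Cc S := by
      intro A B
      have hmul : (M - s) * (∑ _i ∈ A, r)
          ≤ (M - s) * ((∑ i ∈ A, ∑ S ∈ B, m i S) + ∑ S ∈ Bᶜ, Cc S) := by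
        have c1 : (M - s) * (∑ _i ∈ A, r) = ∑ i ∈ A, ∑ S, F i S * (3 - S.card) := by
          rw [Finset.mul_sum]
          exact Finset.sum_congr rfl fun i _ => hXrow i |>.symm ▸ rfl
        have c2 : ∀ i, ∑ S, F i S * (3 - S.card)
            = ∑ S ∈ B, F i S * (3 - S.card) + ∑ S ∈ Bᶜ, F i S * (3 - S.card) :=
          fun i => (Finset.sum_add_sum_compl B _).symm
        have c3 : ∑ i ∈ A, ∑ S ∈ B, F i S * (3 - S.card)
            ≤ ∑ i ∈ A, ∑ S ∈ B, (M - s) * m i S :=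
          Finset.sum_le_sum fun i _ => Finset.sum_le_sum fun S _ => hXle i S
        have c4 : ∑ i ∈ A, ∑ S ∈ Bᶜ, F i S * (3 - S.card)
            ≤ ∑ i, ∑ S ∈ Bᶜ, F i S * (3 - S.card) :=
          Finset.sum_le_sum_of_subset (Finset.subset_univ A)
        have c5 : ∑ i, ∑ S ∈ Bᶜ, F i S * (3 - S.card) = ∑ S ∈ Bᶜ, (M - s) * Cc S := by
          rw [Finset.sum_comm]
          exact Finset.sum_congr rfl fun S _ => hxcolX S
        have c6 : ∑ i ∈ A, (∑ S ∈ B, F i S * (3 - S.card) + ∑ S ∈ Bᶜ, F i S * (3 - S.card))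
            = ∑ i ∈ A, ∑ S ∈ B, F i S * (3 - S.card)
              + ∑ i ∈ A, ∑ S ∈ Bᶜ, F i S * (3 - S.card) := Finset.sum_add_distrib
        have c7 : (M - s) * ((∑ i ∈ A, ∑ S ∈ B, m i S) + ∑ S ∈ Bᶜ, Cc S)
            = ∑ i ∈ A, ∑ S ∈ B, (M - s) * m i S + ∑ S ∈ Bᶜ, (M - s) * Cc S := by
          rw [Nat.mul_add, Finset.mul_sum, Finset.mul_sum]
          congr 1
          exact Finset.sum_congr rfl fun i _ => Finset.mul_sum _ _ _
        calc (M - s) * (∑ _i ∈ A, r) = ∑ i ∈ A, ∑ S, F i S * (3 - S.card) := c1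
          _ = ∑ i ∈ A, (∑ S ∈ B, F i S * (3 - S.card) + ∑ S ∈ Bᶜ, F i S * (3 - S.card)) :=
              Finset.sum_congr rfl fun i _ => c2 i
          _ = _ := c6
          _ ≤ ∑ i ∈ A, ∑ S ∈ B, (M - s) * m i S + ∑ S ∈ Bᶜ, (M - s) * Cc S := by
              rw [← c5]; exact Nat.add_le_add c3 c4
          _ = (M - s) * ((∑ i ∈ A, ∑ S ∈ B, m i S) + ∑ S ∈ Bᶜ, Cc S) := c7.symm
      exact Nat.le_of_mul_le_mul_left hmul (by omega)
    obtain ⟨x, hxle, hxrow, hxcolS⟩ :=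
      transport (∑ _i : Fin k, r) m (fun _ => r) Cc rfl hbal hP
    have hxF : ∀ i S, x i S ≤ F i S := by
      intro i S
      refine le_trans (hxle i S) ?_
      simp only [hm]
      split
      · exact le_rfl
      · exact Nat.zero_le _
    have hxsupp : ∀ i S, x i S ≠ 0 → elig s S := by
      intro i S hx
      by_contra he
      have := hxle i S
      simp only [hm, if_neg he] at this
      omega
    have hbij1 : ∀ g : Finset (Fin M) → ℕ,
        ∑ S ∈ univ.filter (fun S : Finset (Fin M) => w ∈ S), g (S.erase w)
          = ∑ S ∈ univ.filter (fun S : Finset (Fin M) => w ∉ S), g S := by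
      intro g
      refine Finset.sum_nbij' (fun S : Finset (Fin M) => S.erase w) (fun S : Finset (Fin M) => insert w S) ?_ ?_ ?_ ?_ ?_
      · intro S hS
        simp only [Finset.mem_filter, Finset.mem_univ, true_and] at hS ⊢
        exact Finset.notMem_erase w S
      · intro S hS
        simp only [Finset.mem_filter, Finset.mem_univ, true_and] at hS ⊢
        exact Finset.mem_insert_self w S
      · intro S hS
        simp only [Finset.mem_filter, Finset.mem_univ, true_and] at hS
        exact Finset.insert_erase hS
      · intro S hS
        simp only [Finset.mem_filter, Finset.mem_univ, true_and] at hS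
        exact Finset.erase_insert hS
      · intro S _; rfl
    have hbij2 : ∀ (g : Finset (Fin M) → ℕ) (v : Fin M), v ≠ w →
        ∑ S ∈ univ.filter (fun S : Finset (Fin M) => v ∈ S ∧ w ∈ S), g (S.erase w)
          = ∑ S ∈ univ.filter (fun S : Finset (Fin M) => v ∈ S ∧ w ∉ S), g S := by
      intro g v hvw
      refine Finset.sum_nbij' (fun S : Finset (Fin M) => S.erase w) (fun S : Finset (Fin M) => insert w S) ?_ ?_ ?_ ?_ ?_
      · intro S hS
        simp only [Finset.mem_filter, Finset.mem_univ, true_and] at hS ⊢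
        exact ⟨Finset.mem_erase.mpr ⟨hvw, hS.1⟩, Finset.notMem_erase w S⟩
      · intro S hS
        simp only [Finset.mem_filter, Finset.mem_univ, true_and] at hS ⊢
        exact ⟨Finset.mem_insert_of_mem hS.1, Finset.mem_insert_self w S⟩
      · intro S hS
        simp only [Finset.mem_filter, Finset.mem_univ, true_and] at hS
        exact Finset.insert_erase hS.2
      · intro S hS
        simp only [Finset.mem_filter, Finset.mem_univ, true_and] at hS
        exact Finset.erase_insert hS.2
      · intro S _; rfl
    set F' : Fin k → Finset (Fin M) → ℕ :=
      fun i S => if w ∈ S then x i (S.erase w) else F i S - x i S with hF'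
    refine ⟨F', ?_, ?_, ?_, ?_⟩
    · -- support
      intro i S h
      by_cases hew : w ∈ S
      · simp only [hF', if_pos hew] at h
        have he := hxsupp i _ h
        have hc := Finset.card_erase_of_mem hew
        have hpos : 0 < S.card := Finset.card_pos.mpr ⟨w, hew⟩
        constructor
        · have := he.1; omega
        · intro v hv
          by_cases hvw : v = w
          · subst hvw; omega
          · have hve : v ∈ S.erase w := Finset.mem_erase.mpr ⟨hvw, hv⟩
            have := he.2 v hve; omega
      · simp only [hF', if_neg hew] at h
        have hF0 : F i S ≠ 0 := by omega
        obtain ⟨h1, h2⟩ := hsupp i S hF0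
        exact ⟨h1, fun v hv => by have := h2 v hv; omega⟩
    · -- column sums
      intro S hc hv
      by_cases hew : w ∈ S
      · have he' : elig s (S.erase w) := by
          constructor
          · rw [Finset.card_erase_of_mem hew]; omega
          · intro v hve
            obtain ⟨hvne, hvS⟩ := Finset.mem_erase.mp hve
            have h1 := hv v hvS
            have h2 : v.val ≠ s := fun h => hvne (Fin.ext (h.trans hwval.symm))
            omega
        have hsum : ∑ i, F' i S = ∑ i, x i (S.erase w) :=
          Finset.sum_congr rfl fun i _ => by simp only [hF', if_pos hew]
        rw [hsum, hxcolS (S.erase w)]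
        simp only [hCc, if_pos he']
        have hce := Finset.card_erase_of_mem hew
        have hpos : 0 < S.card := Finset.card_pos.mpr ⟨w, hew⟩
        have e1 : M - s - 1 = M - (s + 1) := by omega
        have e2 : 2 - (S.card - 1) = 3 - S.card := by omega
        rw [hce, e1, e2]
      · have hvs : ∀ v ∈ S, v.val < s := by
          intro v hvS
          have h1 := hv v hvS
          have h2 : v.val ≠ s := by
            intro h
            have : v = w := Fin.ext (h.trans hwval.symm)
            exact hew (this ▸ hvS)
          omega
        have hsum : ∑ i, F' i S = ∑ i, (F i S - x i S) :=
          Finset.sum_congr rfl fun i _ => by simp only [hF', if_neg hew]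
        have hadd : ∑ i, (F i S - x i S) + ∑ i, x i S = ∑ i, F i S := by
          rw [← Finset.sum_add_distrib]
          exact Finset.sum_congr rfl fun i _ => Nat.sub_add_cancel (hxF i S)
        have hcS := hcol S hc hvs
        have hx := hxcolS S
        rcases Nat.lt_or_ge S.card 3 with h3 | h3
        · have he2 : elig s S := ⟨by omega, hvs⟩
          have hCcS : Cc S = lam * Nat.choose (M - s - 1) (2 - S.card) := by
            simp [hCc, he2]
          have hpascal : Nat.choose (M - s) (3 - S.card)
              = Nat.choose (M - s - 1) (2 - S.card) + Nat.choose (M - s - 1) (3 - S.card) := by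
            have e1 : 3 - S.card = (2 - S.card) + 1 := by omega
            rw [hsub1, e1]
            exact Nat.choose_succ_succ (M - s - 1) (2 - S.card)
          have hmul : lam * Nat.choose (M - s) (3 - S.card)
              = lam * Nat.choose (M - s - 1) (2 - S.card)
                + lam * Nat.choose (M - s - 1) (3 - S.card) := by
            rw [hpascal, Nat.mul_add]
          have e1 : M - (s + 1) = M - s - 1 := by omega
          rw [hsum, e1]
          omega
        · have h33 : S.card = 3 := le_antisymm hc h3
          have hne : ¬ elig s S := fun he => absurd he.1 (by omega)
          have hCc0 : Cc S = 0 := by simp [hCc, hne]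
          have ec1 : Nat.choose (M - s) (3 - S.card) = 1 := by
            rw [h33, Nat.sub_self, Nat.choose_zero_right]
          have ec2 : Nat.choose (M - (s + 1)) (3 - S.card) = 1 := by
            rw [h33, Nat.sub_self, Nat.choose_zero_right]
          rw [hsum, ec2]
          rw [ec1] at hcS
          omega
    · -- row totals
      intro i
      have hsplit := Finset.sum_filter_add_sum_filter_not univ
        (fun S : Finset (Fin M) => w ∈ S) (F' i)
      have e1 : ∑ S ∈ univ.filter (fun S : Finset (Fin M) => w ∈ S), F' i S
          = ∑ S ∈ univ.filter (fun S : Finset (Fin M) => w ∈ S), x i (S.erase w) :=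
        Finset.sum_congr rfl fun S hS => by
          simp only [hF', if_pos (Finset.mem_filter.mp hS).2]
      have e2 : ∑ S ∈ univ.filter (fun S : Finset (Fin M) => ¬ w ∈ S), F' i S
          = ∑ S ∈ univ.filter (fun S : Finset (Fin M) => ¬ w ∈ S), (F i S - x i S) :=
        Finset.sum_congr rfl fun S hS => by
          simp only [hF', if_neg (Finset.mem_filter.mp hS).2]
      have e3 := hbij1 (x i)
      have e4 : ∑ S ∈ univ.filter (fun S : Finset (Fin M) => ¬ w ∈ S), (F i S - x i S)
          + ∑ S ∈ univ.filter (fun S : Finset (Fin M) => ¬ w ∈ S), x i S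
          = ∑ S ∈ univ.filter (fun S : Finset (Fin M) => ¬ w ∈ S), F i S := by
        rw [← Finset.sum_add_distrib]
        exact Finset.sum_congr rfl fun S _ => Nat.sub_add_cancel (hxF i S)
      have e5 := Finset.sum_filter_add_sum_filter_not univ
        (fun S : Finset (Fin M) => w ∈ S) (F i)
      have e6 : ∑ S ∈ univ.filter (fun S : Finset (Fin M) => w ∈ S), F i S = 0 :=
        Finset.sum_eq_zero fun S hS =>
          hFz i S (fun hall => by
            have := hall w (Finset.mem_filter.mp hS).2
            omega)
      have e7 := htot i
      have e8 : ∑ S ∈ univ.filter (fun S : Finset (Fin M) => w ∉ S), x i S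
          = ∑ S ∈ univ.filter (fun S : Finset (Fin M) => ¬ w ∈ S), x i S := rfl
      omega
    · -- degrees
      intro i v hv
      by_cases hvw : v = w
      · subst hvw
        have e1 : ∑ S ∈ univ.filter (fun S : Finset (Fin M) => w ∈ S), F' i S
            = ∑ S ∈ univ.filter (fun S : Finset (Fin M) => w ∈ S), x i (S.erase w) :=
          Finset.sum_congr rfl fun S hS => by
            simp only [hF', if_pos (Finset.mem_filter.mp hS).2]
        have e3 := hbij1 (x i)
        have e6 : ∑ S ∈ univ.filter (fun S : Finset (Fin M) => w ∈ S), x i S = 0 :=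
          Finset.sum_eq_zero fun S hS => by
            by_contra hx0
            have he := hxsupp i S hx0
            have := he.2 w (Finset.mem_filter.mp hS).2
            omega
        have e5 := Finset.sum_filter_add_sum_filter_not univ
          (fun S : Finset (Fin M) => w ∈ S) (x i)
        have e7 := hxrow i
        have e8 : ∑ S ∈ univ.filter (fun S : Finset (Fin M) => w ∉ S), x i S
            = ∑ S ∈ univ.filter (fun S : Finset (Fin M) => ¬ w ∈ S), x i S := rfl
        omega
      · have hvs : v.val < s := by
          have hne : v.val ≠ s := fun h => hvw (Fin.ext (h.trans hwval.symm))
          omega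
        have hsplit := Finset.sum_filter_add_sum_filter_not
          (univ.filter (fun S : Finset (Fin M) => v ∈ S))
          (fun S : Finset (Fin M) => w ∈ S) (F' i)
        rw [Finset.filter_filter, Finset.filter_filter] at hsplit
        have e1 : ∑ S ∈ univ.filter (fun S : Finset (Fin M) => v ∈ S ∧ w ∈ S), F' i S
            = ∑ S ∈ univ.filter (fun S : Finset (Fin M) => v ∈ S ∧ w ∈ S), x i (S.erase w) :=
          Finset.sum_congr rfl fun S hS => by
            simp only [hF', if_pos (Finset.mem_filter.mp hS).2.2]
        have e2 := hbij2 (x i) v hvw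
        have e3 : ∑ S ∈ univ.filter (fun S : Finset (Fin M) => v ∈ S ∧ ¬ w ∈ S), F' i S
            = ∑ S ∈ univ.filter (fun S : Finset (Fin M) => v ∈ S ∧ ¬ w ∈ S), (F i S - x i S) :=
          Finset.sum_congr rfl fun S hS => by
            simp only [hF', if_neg (Finset.mem_filter.mp hS).2.2]
        have e4 : ∑ S ∈ univ.filter (fun S : Finset (Fin M) => v ∈ S ∧ ¬ w ∈ S), (F i S - x i S)
            + ∑ S ∈ univ.filter (fun S : Finset (Fin M) => v ∈ S ∧ ¬ w ∈ S), x i S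
            = ∑ S ∈ univ.filter (fun S : Finset (Fin M) => v ∈ S ∧ ¬ w ∈ S), F i S := by
          rw [← Finset.sum_add_distrib]
          exact Finset.sum_congr rfl fun S _ => Nat.sub_add_cancel (hxF i S)
        have e5 := Finset.sum_filter_add_sum_filter_not
          (univ.filter (fun S : Finset (Fin M) => v ∈ S))
          (fun S : Finset (Fin M) => w ∈ S) (F i)
        rw [Finset.filter_filter, Finset.filter_filter] at e5
        have e6 : ∑ S ∈ univ.filter (fun S : Finset (Fin M) => v ∈ S ∧ w ∈ S), F i S = 0 :=
          Finset.sum_eq_zero fun S hS =>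
            hFz i S (fun hall => by
              have := hall w (Finset.mem_filter.mp hS).2.2
              omega)
        have e7 := hdeg i v hvs
        have e8 : ∑ S ∈ univ.filter (fun S : Finset (Fin M) => v ∈ S ∧ w ∉ S), x i S
            = ∑ S ∈ univ.filter (fun S : Finset (Fin M) => v ∈ S ∧ ¬ w ∈ S), x i S := rfl
        omega



lemma exists_fiber_fun (k lam : ℕ) (f : Fin k → ℕ) (hf : ∑ i, f i = lam) :
    ∃ g : Fin lam → Fin k, ∀ i, (univ.filter (fun l => g l = i)).card = f i := by
  have hcard : Fintype.card ((i : Fin k) × Fin (f i)) = lam := by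
    simp [hf]
  let e := Fintype.equivFinOfCardEq hcard
  refine ⟨fun l => (e.symm l).1, fun i => ?_⟩
  have h : (univ : Finset (Fin (f i))).card
      = (univ.filter (fun l : Fin lam => (e.symm l).1 = i)).card := by
    refine Finset.card_bij (fun t _ => e ⟨i, t⟩) ?_ ?_ ?_
    · intro t _
      simp only [Finset.mem_filter, Finset.mem_univ, true_and, Equiv.symm_apply_apply]
    · intro t1 _ t2 _ h
      have := e.injective h
      exact eq_of_heq (Sigma.mk.inj_iff.mp this).2
    · intro l hl
      have h := (Finset.mem_filter.mp hl).2
      subst h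
      exact ⟨(e.symm l).2, Finset.mem_univ _, e.apply_symm_apply l⟩
  rw [← h, Finset.card_univ, Fintype.card_fin]

lemma card_triples_mem (n : ℕ) (hn : 3 ≤ n) (v : Fin n) :
    (univ.filter (fun T : {T : Finset (Fin n) // T.card = 3} => v ∈ T.val)).card
      = Nat.choose (n - 1) 2 := by
  have hbase : (Finset.powersetCard 2 ((univ : Finset (Fin n)).erase v)).card
      = Nat.choose (n - 1) 2 := by
    rw [Finset.card_powersetCard, Finset.card_erase_of_mem (mem_univ v), Finset.card_univ,
      Fintype.card_fin]
  rw [← hbase]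
  refine Finset.card_bij (fun T _ => T.val.erase v) ?_ ?_ ?_
  · intro T hT
    have hvT := (Finset.mem_filter.mp hT).2
    rw [Finset.mem_powersetCard]
    constructor
    · exact Finset.erase_subset_erase v (Finset.subset_univ _)
    · rw [Finset.card_erase_of_mem hvT, T.2]
  · intro T1 hT1 T2 hT2 h
    have h1 := (Finset.mem_filter.mp hT1).2
    have h2 := (Finset.mem_filter.mp hT2).2
    apply Subtype.ext
    rw [← Finset.insert_erase h1, ← Finset.insert_erase h2, h]
  · intro S hS
    rw [Finset.mem_powersetCard] at hS
    have hvS : v ∉ S := fun h => (Finset.mem_erase.mp (hS.1 h)).1 rfl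
    refine ⟨⟨insert v S, ?_⟩, ?_, ?_⟩
    · rw [Finset.card_insert_of_notMem hvS, hS.2]
    · simp only [Finset.mem_filter, Finset.mem_univ, true_and]
      exact Finset.mem_insert_self v S
    · exact Finset.erase_insert hvS


end LambdaKn3Aux

open LambdaKn3Aux

/-- **Characterization of `r`-factorizability of `λK_n³`.**
For `n ≥ 3`, the complete 3-uniform multi-hypergraph `λK_n³` is
`r`-factorizable — there exist `k ≥ 1` and a coloring `c` of its edges
(pairs `(T, l)` with `T ⊆ Fin n`, `|T| = 3`, `l ∈ Fin λ`) by colors in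
`Fin k` such that every vertex is incident with exactly `r` edges of each
color — if and only if `3 ∣ r·n` and `r ∣ λ·C(n-1,2)`. -/
theorem lambdaKn3_rFactorizable_iff (n lam : ℕ) (hn : 3 ≤ n) (hlam : 1 ≤ lam)
    (r : ℕ) (hr : 0 < r) :
    (∃ k : ℕ, 1 ≤ k ∧
      ∃ c : {T : Finset (Fin n) // T.card = 3} → Fin lam → Fin k,
        ∀ v : Fin n, ∀ j : Fin k,
          (Finset.univ.filter
            fun p : {T : Finset (Fin n) // T.card = 3} × Fin lam =>
              v ∈ p.1.val ∧ c p.1 p.2 = j).card = r) ↔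
    (3 ∣ r * n ∧ r ∣ lam * Nat.choose (n - 1) 2) := by
  constructor
  · rintro ⟨k, hk, c, hc⟩
    constructor
    · -- 3 ∣ r * n
      set j0 : Fin k := ⟨0, hk⟩ with hj0
      have key : ∑ v : Fin n, ((univ.filter fun p : {T : Finset (Fin n) // T.card = 3} × Fin lam =>
          v ∈ p.1.val ∧ c p.1 p.2 = j0).card) = r * n := by
        rw [Finset.sum_congr rfl fun v _ => hc v j0, Finset.sum_const, card_univ,
          Fintype.card_fin, smul_eq_mul, Nat.mul_comm]
      have key2 : ∑ v : Fin n, ((univ.filter fun p : {T : Finset (Fin n) // T.card = 3} × Fin lam =>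
          v ∈ p.1.val ∧ c p.1 p.2 = j0).card)
          = 3 * (univ.filter fun p : {T : Finset (Fin n) // T.card = 3} × Fin lam =>
              c p.1 p.2 = j0).card := by
        have c1 : ∀ v : Fin n, ((univ.filter fun p : {T : Finset (Fin n) // T.card = 3} × Fin lam =>
            v ∈ p.1.val ∧ c p.1 p.2 = j0).card)
            = ∑ p : {T : Finset (Fin n) // T.card = 3} × Fin lam,
                (if v ∈ p.1.val ∧ c p.1 p.2 = j0 then 1 else 0) := fun v =>
          Finset.card_filter _ _
        rw [Finset.sum_congr rfl fun v _ => c1 v, Finset.sum_comm]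
        have c2 : ∀ p : {T : Finset (Fin n) // T.card = 3} × Fin lam,
            ∑ v : Fin n, (if v ∈ p.1.val ∧ c p.1 p.2 = j0 then 1 else 0)
            = if c p.1 p.2 = j0 then 3 else 0 := by
          intro p
          by_cases hcp : c p.1 p.2 = j0
          · simp only [hcp, and_true, if_pos rfl]
            rw [Finset.sum_ite_mem, Finset.univ_inter]
            simp [p.1.2]
          · simp [hcp]
        rw [Finset.sum_congr rfl fun p _ => c2 p, ← Finset.sum_filter, Finset.sum_const,
          smul_eq_mul, Nat.mul_comm]
      exact ⟨_, (key.symm.trans key2)⟩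
    · -- r ∣ lam * choose (n-1) 2
      have v0 : Fin n := ⟨0, by omega⟩
      have hsplit := Finset.card_eq_sum_card_fiberwise
        (s := univ.filter fun p : {T : Finset (Fin n) // T.card = 3} × Fin lam => v0 ∈ p.1.val)
        (t := univ) (f := fun p => c p.1 p.2) (fun x _ => mem_univ _)
      have e : ∀ j : Fin k, ((univ.filter fun p : {T : Finset (Fin n) // T.card = 3} × Fin lam =>
          v0 ∈ p.1.val).filter (fun p => c p.1 p.2 = j)).card
          = r := by
        intro j
        rw [Finset.filter_filter]
        exact hc v0 j
      rw [Finset.sum_congr rfl fun j _ => e j, Finset.sum_const, card_univ,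
        Fintype.card_fin, smul_eq_mul] at hsplit
      have hcardprod : (univ.filter fun p : {T : Finset (Fin n) // T.card = 3} × Fin lam =>
          v0 ∈ p.1.val).card = Nat.choose (n - 1) 2 * lam := by
        rw [← Finset.univ_product_univ,
          Finset.filter_product_left (fun T : {T : Finset (Fin n) // T.card = 3} => v0 ∈ T.val),
          Finset.card_product, card_triples_mem n hn v0, Finset.card_univ, Fintype.card_fin]
      rw [hcardprod] at hsplit
      exact ⟨k, by rw [Nat.mul_comm lam, hsplit]; exact Nat.mul_comm k r⟩
  · rintro ⟨h3, hdvd⟩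
    set a : ℕ := r * n / 3 with hadef
    set k : ℕ := lam * Nat.choose (n - 1) 2 / r with hkdef
    have hk : k * r = lam * Nat.choose (n - 1) 2 := Nat.div_mul_cancel hdvd
    have ha : 3 * a = r * n := Nat.mul_div_cancel' h3
    have hmc : n * Nat.choose (n - 1) 2 = Nat.choose n 3 * 3 := by
      have h0 := Nat.add_one_mul_choose_eq (n - 1) 2
      rw [show n - 1 + 1 = n by omega] at h0
      exact h0
    have hka : k * a = lam * Nat.choose n 3 := by
      have h1 : 3 * (k * a) = 3 * (lam * Nat.choose n 3) := by
        calc 3 * (k * a) = k * (3 * a) := by ring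
          _ = k * (r * n) := by rw [ha]
          _ = (k * r) * n := by ring
          _ = lam * Nat.choose (n - 1) 2 * n := by rw [hk]
          _ = lam * (n * Nat.choose (n - 1) 2) := by ring
          _ = lam * (Nat.choose n 3 * 3) := by rw [hmc]
          _ = 3 * (lam * Nat.choose n 3) := by ring
      exact Nat.eq_of_mul_eq_mul_left (by omega) h1
    obtain ⟨F, hsupp, hcol, htot, hdeg⟩ := stage n lam r k a (by omega) ha hka n le_rfl
    have hfin : ∀ S : Finset (Fin n), S.card = 3 → ∑ i, F i S = lam := by
      intro S h3c
      have h := hcol S (le_of_eq h3c) (fun v _ => v.isLt)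
      rw [h3c, Nat.sub_self, Nat.sub_self, Nat.choose_zero_right, Nat.mul_one] at h
      exact h
    have hk1 : 1 ≤ k := by
      have hC : 0 < Nat.choose (n - 1) 2 := Nat.choose_pos (by omega)
      rcases Nat.eq_zero_or_pos k with h0 | h1
      · rw [h0, Nat.zero_mul] at hk
        have : 0 < lam * Nat.choose (n - 1) 2 := Nat.mul_pos (by omega) hC
        omega
      · exact h1
    have hfib : ∀ T : {T : Finset (Fin n) // T.card = 3}, ∃ g : Fin lam → Fin k,
        ∀ i, (univ.filter fun l => g l = i).card = F i T.val :=
      fun T => exists_fiber_fun k lam (fun i => F i T.val) (hfin T.val T.2)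
    choose g hg using hfib
    refine ⟨k, hk1, fun T => g T, ?_⟩
    intro v j
    have hzero : ∀ S : Finset (Fin n), S.card ≠ 3 → F j S = 0 := by
      intro S hc3
      by_contra hF
      have h1 := (hsupp j S hF).1
      have h2 := hcol S h1 (fun v _ => v.isLt)
      have h4 : Nat.choose (n - n) (3 - S.card) = 0 := by
        rw [Nat.sub_self]
        exact Nat.choose_eq_zero_of_lt (by omega)
      rw [h4, Nat.mul_zero] at h2
      exact hF ((Finset.sum_eq_zero_iff.mp h2) j (mem_univ j))
    have step1 : (univ.filter fun p : {T : Finset (Fin n) // T.card = 3} × Fin lam =>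
        v ∈ p.1.val ∧ g p.1 p.2 = j).card
        = ∑ T : {T : Finset (Fin n) // T.card = 3},
            (if v ∈ T.val then F j T.val else 0) := by
      rw [Finset.card_filter, Fintype.sum_prod_type]
      refine Finset.sum_congr rfl fun T _ => ?_
      by_cases hvT : v ∈ T.val
      · simp only [hvT, true_and, if_pos hvT]
        rw [← Finset.card_filter]
        exact hg T j
      · simp [hvT]
    have step2 : ∑ T : {T : Finset (Fin n) // T.card = 3}, (if v ∈ T.val then F j T.val else 0)
        = ∑ T ∈ univ.filter (fun T : {T : Finset (Fin n) // T.card = 3} => v ∈ T.val),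
            F j T.val := (Finset.sum_filter _ _).symm
    have step3 : ∑ T ∈ univ.filter (fun T : {T : Finset (Fin n) // T.card = 3} => v ∈ T.val),
        F j T.val
        = ∑ S ∈ univ.filter (fun S : Finset (Fin n) => v ∈ S ∧ S.card = 3), F j S := by
      refine Finset.sum_bij' (fun T _ => T.val)
        (fun S hS => ⟨S, (Finset.mem_filter.mp hS).2.2⟩) ?_ ?_ ?_ ?_ ?_
      · intro T hT
        simp only [Finset.mem_filter, Finset.mem_univ, true_and] at hT ⊢
        exact ⟨hT, T.2⟩
      · intro S hS
        simp only [Finset.mem_filter, Finset.mem_univ, true_and] at hS ⊢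
        exact hS.1
      · intro T _; rfl
      · intro S _; rfl
      · intro T _; rfl
    have hsplit2 := Finset.sum_filter_add_sum_filter_not
      (univ.filter fun S : Finset (Fin n) => v ∈ S)
      (fun S : Finset (Fin n) => S.card = 3) (F j)
    rw [Finset.filter_filter, Finset.filter_filter] at hsplit2
    have hz2 : ∑ S ∈ univ.filter (fun S : Finset (Fin n) => v ∈ S ∧ ¬ S.card = 3), F j S = 0 :=
      Finset.sum_eq_zero fun S hS => hzero S (Finset.mem_filter.mp hS).2.2
    have hd := hdeg j v v.isLt
    rw [step1, step2, step3]
    omega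
end
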